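/- arXiv:2006.13497 — 6 statements merged into one kernel-verified Lean document; each statement's English description precedes it below -/
import Mathlib

section
/- Let Λ ⊂ ℝ^d be a countable set and γ > 0. If the series ∑_{λ∈Λ\{0}} |λ|^{-γ} diverges, then γ ≤ dim⁺(Λ). -/
open MeasureTheory Filter Set
open scoped ENNReal RealInnerProductSpace ComplexConjugate Pointwise Topology

noncomputable section

/-- Cast an integer vector to a point of Euclidean space. -/
def intCast {d : ℕ} (v : Fin d → ℤ) : EuclideanSpace ℝ (Fin d) :=
  (WithLp.equiv 2 (Fin d → ℝ)).symm fun i => (v i : ℝ)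

/-- The real matrix obtained from an integer matrix. -/
def matR {d : ℕ} (R : Matrix (Fin d) (Fin d) ℤ) : Matrix (Fin d) (Fin d) ℝ :=
  R.map (Int.cast : ℤ → ℝ)

/-- Matrix action on Euclidean space. -/
def mulVecE {d : ℕ} (A : Matrix (Fin d) (Fin d) ℝ) (x : EuclideanSpace ℝ (Fin d)) :
    EuclideanSpace ℝ (Fin d) :=
  (WithLp.equiv 2 (Fin d → ℝ)).symm (A.mulVec ((WithLp.equiv 2 (Fin d → ℝ)) x))

/-- A matrix is expansive if all of its (complex) eigenvalues have modulus > 1. -/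
def IsExpansive {d : ℕ} (R : Matrix (Fin d) (Fin d) ℤ) : Prop :=
  ∀ z : ℂ, (R.map (Int.cast : ℤ → ℂ)).charpoly.IsRoot z → 1 < ‖z‖

/-- The matrix `H = (1/√q) (e^{-2πi ⟨R⁻¹ b, l⟩})_{b ∈ B, l ∈ L}`. -/
def hadamardMatrix {d : ℕ} (R : Matrix (Fin d) (Fin d) ℤ) (B L : Finset (Fin d → ℤ)) :
    Matrix {b // b ∈ B} {l // l ∈ L} ℂ :=
  fun b l =>
    ((1 / Real.sqrt (B.card) : ℝ) : ℂ) *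
      Complex.exp (((-(2 * Real.pi *
        (dotProduct ((matR R)⁻¹.mulVec (fun i => ((b : Fin d → ℤ) i : ℝ)))
          (fun i => ((l : Fin d → ℤ) i : ℝ)))) : ℝ) : ℂ) * Complex.I)

/-- `(R, B, L)` is a Hadamard triple: `#B = #L` and the matrix
`H = (1/√q) (e^{-2πi ⟨R⁻¹ b, l⟩})_{b ∈ B, l ∈ L}` is unitary (`H* H = I`). -/
def IsHadamardTriple {d : ℕ} (R : Matrix (Fin d) (Fin d) ℤ) (B L : Finset (Fin d → ℤ)) : Prop :=
  B.card = L.card ∧ Matrix.conjTranspose (hadamardMatrix R B L) * hadamardMatrix R B L = 1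

/-- The self-affine measure `μ(R,B)`: the (unique) Borel probability measure with
invariance `μ(E) = (1/#B) ∑_{b ∈ B} μ(τ_b⁻¹ E)` for `τ_b x = R⁻¹(x + b)`. -/
def IsSelfAffine {d : ℕ} (R : Matrix (Fin d) (Fin d) ℤ) (B : Finset (Fin d → ℤ))
    (μ : Measure (EuclideanSpace ℝ (Fin d))) : Prop :=
  IsProbabilityMeasure μ ∧
  ∀ E : Set (EuclideanSpace ℝ (Fin d)), MeasurableSet E →
    μ E = (B.card : ℝ≥0∞)⁻¹ *
      ∑ b ∈ B, μ ((fun x => mulVecE (matR R)⁻¹ (x + intCast b)) ⁻¹' E)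

/-- The Fourier transform `μ̂(ξ) = ∫ e^{-2πi⟨ξ,x⟩} dμ(x)` of a measure. -/
def muHat {d : ℕ} (μ : Measure (EuclideanSpace ℝ (Fin d))) (ξ : EuclideanSpace ℝ (Fin d)) : ℂ :=
  ∫ x, Complex.exp (((-(2 * Real.pi * (inner ℝ ξ x : ℝ)) : ℝ) : ℂ) * Complex.I) ∂μ

/-- The exponential function `e_l(x) = e^{2πi⟨l,x⟩}`. -/
def expFn {d : ℕ} (l x : EuclideanSpace ℝ (Fin d)) : ℂ :=
  Complex.exp (((2 * Real.pi * (inner ℝ l x : ℝ) : ℝ) : ℂ) * Complex.I)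

/-- `Λ` is a spectrum of `μ`: it is countable and `E(Λ) = {e^{2πi⟨λ,x⟩} : λ ∈ Λ}` is an
orthonormal basis of `L²(μ)` (i.e. an orthonormal family which is maximal). -/
def IsSpectrum {d : ℕ} (μ : Measure (EuclideanSpace ℝ (Fin d)))
    (Λ : Set (EuclideanSpace ℝ (Fin d))) : Prop :=
  Λ.Countable ∧
  (∀ l ∈ Λ, ∫ x, expFn l x * conj (expFn l x) ∂μ = 1) ∧
  (∀ l ∈ Λ, ∀ l' ∈ Λ, l ≠ l' → ∫ x, expFn l x * conj (expFn l' x) ∂μ = 0) ∧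
  (∀ f : Lp ℂ 2 μ, (∀ l ∈ Λ, ∫ x, f x * conj (expFn l x) ∂μ = 0) → f = 0)

/-- The cube `x + [-h,h]^d`. -/
def cube {d : ℕ} (x : EuclideanSpace ℝ (Fin d)) (h : ℝ) : Set (EuclideanSpace ℝ (Fin d)) :=
  {y | ∀ i, |y i - x i| ≤ h}

/-- The upper `r`-Beurling density
`D_r⁺(Λ) = limsup_{h→∞} sup_x #(Λ ∩ (x+[-h,h]^d))/h^r`. -/
def beurlingDensity {d : ℕ} (r : ℝ) (Λ : Set (EuclideanSpace ℝ (Fin d))) : ℝ≥0∞ :=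
  Filter.limsup (fun h : ℝ => ⨆ x : EuclideanSpace ℝ (Fin d),
    ((Λ ∩ cube x h).encard : ℝ≥0∞) / ENNReal.ofReal (h ^ r)) Filter.atTop

/-- The Beurling dimension `dim⁺(Λ) = sup {r > 0 : D_r⁺(Λ) > 0}`. -/
def beurlingDim {d : ℕ} (Λ : Set (EuclideanSpace ℝ (Fin d))) : ℝ≥0∞ :=
  ⨆ r ∈ {r : ℝ | 0 < r ∧ 0 < beurlingDensity r Λ}, ENNReal.ofReal r

/-- `Λ = {λ_n}` is `b`-lacunary: `λ_0 = 0`, `|λ_1| ≥ b` and `|λ_{n+1}| ≥ b|λ_n|` for `n ≥ 1`. -/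
def IsLacunary {d : ℕ} (b : ℝ) (Λ : Set (EuclideanSpace ℝ (Fin d))) : Prop :=
  ∃ f : ℕ → EuclideanSpace ℝ (Fin d), Λ = Set.range f ∧ f 0 = 0 ∧ b ≤ ‖f 1‖ ∧
    ∀ n, 1 ≤ n → b * ‖f n‖ ≤ ‖f (n + 1)‖

/-- The periodic zero set `Z(μ) = {ξ : μ̂(ξ+k) = 0 for all k ∈ ℤ^d}`. -/
def periodicZeroSet {d : ℕ} (μ : Measure (EuclideanSpace ℝ (Fin d))) :
    Set (EuclideanSpace ℝ (Fin d)) :=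
  {ξ | ∀ k : Fin d → ℤ, muHat μ (ξ + intCast k) = 0}

/-- `𝐁_n = B + R B + ⋯ + R^{n-1} B`, defined recursively. -/
def iterSum {d : ℕ} (R : Matrix (Fin d) (Fin d) ℤ) (B : Finset (Fin d → ℤ)) :
    ℕ → Finset (Fin d → ℤ)
  | 0 => {0}
  | n + 1 => B + (iterSum R B n).image fun v => R.mulVec v

end

lemma coord_abs_le_norm' {d : ℕ} (x : EuclideanSpace ℝ (Fin d)) (i : Fin d) : |x i| ≤ ‖x‖ := by
  rw [EuclideanSpace.norm_eq]
  rw [show |x i| = Real.sqrt (‖x i‖ ^ 2) by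
    rw [Real.sqrt_sq_eq_abs, Real.norm_eq_abs, abs_abs]]
  exact Real.sqrt_le_sqrt
    (Finset.single_le_sum (f := fun j => ‖x j‖ ^ 2) (fun j _ => sq_nonneg _) (Finset.mem_univ i))

/-- Dyadic annuli. -/
def bdAnn {d : ℕ} (Λ : Set (EuclideanSpace ℝ (Fin d))) (H : ℝ) :
    ℕ → Set (EuclideanSpace ℝ (Fin d))
  | 0 => {x | x ∈ Λ \ {0} ∧ ‖x‖ ≤ H}
  | n + 1 => {x | x ∈ Λ \ {0} ∧ ‖x‖ ≤ H * 2 ^ (n + 1) ∧ H * 2 ^ n < ‖x‖}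


set_option maxHeartbeats 1000000 in
lemma summable_of_counting {d : ℕ} (Λ : Set (EuclideanSpace ℝ (Fin d)))
    (γ r H : ℝ) (hγ : 0 < γ) (hr0 : 0 < r) (hrγ : r < γ) (hH1 : 1 ≤ H)
    (hcount : ∀ h : ℝ, H ≤ h → ((Λ ∩ cube 0 h).encard : ℝ≥0∞) ≤ ENNReal.ofReal (h ^ r)) :
    Summable (fun l : ↥(Λ \ {0}) => ‖(l : EuclideanSpace ℝ (Fin d))‖ ^ (-γ)) := by
  have hH0 : (0 : ℝ) < H := lt_of_lt_of_le one_pos hH1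
  have hball : ∀ h : ℝ, ∀ l ∈ Λ, ‖l‖ ≤ h → l ∈ Λ ∩ cube 0 h := by
    intro h l hl hn
    refine ⟨hl, fun i => ?_⟩
    simp only [PiLp.zero_apply, sub_zero]
    exact (coord_abs_le_norm' l i).trans hn
  set g : EuclideanSpace ℝ (Fin d) → ℝ≥0∞ := fun l => ENNReal.ofReal (‖l‖ ^ (-γ)) with hg
  set A := bdAnn Λ H with hA
  -- covering
  have hsub : Λ \ {0} ⊆ ⋃ n, A n := by
    intro l hl
    simp only [Set.mem_iUnion]
    by_cases hle : ‖l‖ ≤ H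
    · exact ⟨0, show l ∈ A 0 from ⟨hl, hle⟩⟩
    · have hex : ∃ m : ℕ, ‖l‖ ≤ H * 2 ^ m := by
        obtain ⟨m, hm⟩ := pow_unbounded_of_one_lt ‖l‖ (one_lt_two (α := ℝ))
        exact ⟨m, hm.le.trans (le_mul_of_one_le_left (by positivity) hH1)⟩
      have hm := Nat.find_spec hex
      have hne : Nat.find hex ≠ 0 := by
        intro h0
        rw [h0] at hm
        simp only [pow_zero, mul_one] at hm
        exact hle hm
      obtain ⟨k, hk⟩ := Nat.exists_eq_succ_of_ne_zero hne
      refine ⟨k + 1, show l ∈ A (k + 1) from ⟨hl, ?_, ?_⟩⟩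
      · simpa only [hk, Nat.succ_eq_add_one] using hm
      · have := Nat.find_min hex (m := k) (by omega)
        exact not_le.mp this
  -- bound on each annulus count
  have hAsub : ∀ n : ℕ, A (n + 1) ⊆ Λ ∩ cube 0 (H * 2 ^ (n + 1)) := by
    intro n l hl
    obtain ⟨⟨h1, -⟩, h2, -⟩ :=
      (hl : l ∈ Λ \ {0} ∧ ‖l‖ ≤ H * 2 ^ (n + 1) ∧ H * 2 ^ n < ‖l‖)
    exact hball _ l h1 h2
  have hHle : ∀ m : ℕ, H ≤ H * 2 ^ m := by
    intro m
    have : (1 : ℝ) ≤ 2 ^ m := one_le_pow₀ one_le_two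
    nlinarith
  -- geometric constants
  set C : ℝ := H ^ (r - γ) * (2 : ℝ) ^ r with hCdef
  set q : ℝ := (2 : ℝ) ^ (r - γ) with hqdef
  have hC0 : 0 ≤ C := by positivity
  have hq0 : 0 ≤ q := by positivity
  have hq1 : q < 1 := Real.rpow_lt_one_of_one_lt_of_neg one_lt_two (by linarith)
  have e1 : ∀ (m : ℕ) (s : ℝ), (H * 2 ^ m) ^ s = H ^ s * (2 : ℝ) ^ ((m : ℝ) * s) := by
    intro m s
    rw [Real.mul_rpow hH0.le (by positivity), ← Real.rpow_natCast 2 m,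
      ← Real.rpow_mul (by norm_num)]
  have key : ∀ n : ℕ, (H * 2 ^ (n + 1)) ^ r * (H * 2 ^ n) ^ (-γ) = C * q ^ n := by
    intro n
    rw [e1 (n + 1) r, e1 n (-γ),
      show q ^ n = (2 : ℝ) ^ ((r - γ) * (n : ℝ)) by
        rw [hqdef, ← Real.rpow_natCast ((2:ℝ) ^ (r - γ)) n, ← Real.rpow_mul (by norm_num)],
      hCdef, mul_mul_mul_comm, ← Real.rpow_add hH0, mul_assoc,
      ← Real.rpow_add (by norm_num : (0:ℝ) < 2),
      ← Real.rpow_add (by norm_num : (0:ℝ) < 2),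
      show r + -γ = r - γ by ring,
      show ((n + 1 : ℕ) : ℝ) * r + (n : ℝ) * (-γ) = r + (r - γ) * (n : ℝ) by push_cast; ring]
  have hbound : ∀ n : ℕ, (∑' l : ↥(A (n + 1)), g ↑l) ≤
      ENNReal.ofReal C * (ENNReal.ofReal q) ^ n := by
    intro n
    have hstep : ∀ l : ↥(A (n + 1)), g ↑l ≤ ENNReal.ofReal ((H * 2 ^ n) ^ (-γ)) := by
      rintro ⟨l, hl⟩
      obtain ⟨-, -, h3⟩ :=
        (hl : l ∈ Λ \ {0} ∧ ‖l‖ ≤ H * 2 ^ (n + 1) ∧ H * 2 ^ n < ‖l‖)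
      apply ENNReal.ofReal_le_ofReal
      exact Real.rpow_le_rpow_of_nonpos (by positivity) h3.le (neg_nonpos.mpr hγ.le)
    calc (∑' l : ↥(A (n + 1)), g ↑l)
        ≤ ∑' _ : ↥(A (n + 1)), ENNReal.ofReal ((H * 2 ^ n) ^ (-γ)) :=
          ENNReal.tsum_le_tsum hstep
      _ = (A (n + 1)).encard * ENNReal.ofReal ((H * 2 ^ n) ^ (-γ)) :=
          ENNReal.tsum_set_const _ _
      _ ≤ ENNReal.ofReal ((H * 2 ^ (n + 1)) ^ r) * ENNReal.ofReal ((H * 2 ^ n) ^ (-γ)) := by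
          gcongr
          calc ((A (n + 1)).encard : ℝ≥0∞)
              ≤ ((Λ ∩ cube 0 (H * 2 ^ (n + 1))).encard : ℝ≥0∞) := by
                exact_mod_cast Set.encard_mono (hAsub n)
            _ ≤ _ := hcount _ (hHle (n + 1))
      _ = ENNReal.ofReal ((H * 2 ^ (n + 1)) ^ r * (H * 2 ^ n) ^ (-γ)) :=
          (ENNReal.ofReal_mul (by positivity)).symm
      _ = ENNReal.ofReal (C * q ^ n) := by rw [key n]
      _ = ENNReal.ofReal C * (ENNReal.ofReal q) ^ n := by
          rw [ENNReal.ofReal_mul hC0, ENNReal.ofReal_pow hq0]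
  -- A 0 is finite
  have hA0sub : A 0 ⊆ Λ ∩ cube 0 H := by
    intro l hl
    obtain ⟨⟨h1, -⟩, h2⟩ := (hl : l ∈ Λ \ {0} ∧ ‖l‖ ≤ H)
    exact hball _ l h1 h2
  have hA0fin : (A 0).Finite := by
    rw [← Set.not_infinite]
    intro hinf
    have h1 : ((A 0).encard : ℝ≥0∞) ≤ ((Λ ∩ cube 0 H).encard : ℝ≥0∞) := by
      exact_mod_cast Set.encard_mono hA0sub
    have h2 := h1.trans (hcount H le_rfl)
    rw [Set.encard_eq_top hinf] at h2
    simp only [ENat.toENNReal_top, top_le_iff] at h2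
    exact ENNReal.ofReal_ne_top h2
  have hA0 : (∑' l : ↥(A 0), g ↑l) ≠ ⊤ := by
    haveI := hA0fin.fintype
    rw [tsum_fintype]
    exact (ENNReal.sum_lt_top.mpr fun l _ => ENNReal.ofReal_lt_top).ne
  -- total sum is finite
  have hT : (∑' l : ↥(Λ \ {0}), g ↑l) ≠ ⊤ := by
    have h1 : (∑' l : ↥(Λ \ {0}), g ↑l) ≤ ∑' l : ↥(⋃ n, A n), g ↑l :=
      ENNReal.tsum_mono_subtype g hsub
    have h2 : (∑' l : ↥(⋃ n, A n), g ↑l) ≤ ∑' n, ∑' l : ↥(A n), g ↑l :=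
      ENNReal.tsum_iUnion_le_tsum g A
    have h3 : (∑' n, ∑' l : ↥(A n), g ↑l) =
        (∑' l : ↥(A 0), g ↑l) + ∑' n, ∑' l : ↥(A (n + 1)), g ↑l :=
      tsum_eq_zero_add' ENNReal.summable
    have h4 : (∑' n, ∑' l : ↥(A (n + 1)), g ↑l) ≤
        ∑' n, ENNReal.ofReal C * (ENNReal.ofReal q) ^ n := ENNReal.tsum_le_tsum hbound
    have h5 : (∑' n, ENNReal.ofReal C * (ENNReal.ofReal q) ^ n) =
        ENNReal.ofReal C * (1 - ENNReal.ofReal q)⁻¹ := by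
      rw [ENNReal.tsum_mul_left, ENNReal.tsum_geometric]
    have h6 : ENNReal.ofReal C * (1 - ENNReal.ofReal q)⁻¹ ≠ ⊤ := by
      apply ENNReal.mul_ne_top ENNReal.ofReal_ne_top
      rw [ENNReal.inv_ne_top]
      rw [ne_eq, tsub_eq_zero_iff_le, not_le]
      exact ENNReal.ofReal_lt_one.mpr hq1
    have htail : (∑' n, ∑' l : ↥(A (n + 1)), g ↑l) ≠ ⊤ :=
      ne_top_of_le_ne_top (h5 ▸ h6) h4
    have hfin : (∑' n, ∑' l : ↥(A n), g ↑l) ≠ ⊤ := by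
      rw [h3]
      exact ENNReal.add_ne_top.mpr ⟨hA0, htail⟩
    exact ne_top_of_le_ne_top hfin (h1.trans h2)
  have hs := ENNReal.summable_toReal hT
  exact hs.congr fun l => ENNReal.toReal_ofReal (Real.rpow_nonneg (norm_nonneg _) _)

/-- If `∑_{λ ∈ Λ \ {0}} |λ|^{-γ}` diverges, then `γ ≤ dim⁺(Λ)`. -/
theorem divergent_series_le_beurlingDim
    {d : ℕ} (Λ : Set (EuclideanSpace ℝ (Fin d))) (hΛ : Λ.Countable)
    (γ : ℝ) (hγ : 0 < γ)
    (hdiv : ¬ Summable (fun l : ↥(Λ \ {0}) => ‖(l : EuclideanSpace ℝ (Fin d))‖ ^ (-γ))) :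
    ENNReal.ofReal γ ≤ beurlingDim Λ := by
  by_contra hcon
  have hDm_lt : beurlingDim Λ < ENNReal.ofReal γ := lt_of_not_ge hcon
  have hDmtop : beurlingDim Λ ≠ ⊤ := ne_top_of_lt hDm_lt
  set D := (beurlingDim Λ).toReal with hD
  have hD0 : 0 ≤ D := ENNReal.toReal_nonneg
  have hDlt : D < γ := (ENNReal.lt_ofReal_iff_toReal_lt hDmtop).mp hDm_lt
  set r := (D + γ) / 2 with hrdef
  have hr0 : 0 < r := by positivity
  have hrγ : r < γ := by rw [hrdef]; linarith
  have hDr : beurlingDim Λ < ENNReal.ofReal r :=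
    (ENNReal.lt_ofReal_iff_toReal_lt hDmtop).mpr (by rw [hrdef]; linarith)
  have hdens : beurlingDensity r Λ = 0 := by
    by_contra hpos
    have hmem : r ∈ {r : ℝ | 0 < r ∧ 0 < beurlingDensity r Λ} :=
      ⟨hr0, pos_iff_ne_zero.mpr hpos⟩
    exact absurd hDr (not_lt.mpr (le_biSup (fun s => ENNReal.ofReal s) hmem))
  have hlt : Filter.limsup (fun h : ℝ => ⨆ x : EuclideanSpace ℝ (Fin d),
      ((Λ ∩ cube x h).encard : ℝ≥0∞) / ENNReal.ofReal (h ^ r)) Filter.atTop < 1 := by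
    rw [show Filter.limsup _ _ = beurlingDensity r Λ from rfl, hdens]
    exact zero_lt_one
  have hev := eventually_lt_of_limsup_lt hlt
  rw [Filter.eventually_atTop] at hev
  obtain ⟨H₀, hH₀⟩ := hev
  set H : ℝ := max H₀ 1 with hHdef
  have hH1 : (1 : ℝ) ≤ H := le_max_right _ _
  have hcount : ∀ h : ℝ, H ≤ h → ((Λ ∩ cube 0 h).encard : ℝ≥0∞) ≤ ENNReal.ofReal (h ^ r) := by
    intro h hh
    have h1 : (1 : ℝ) ≤ h := hH1.trans hh
    have hF := hH₀ h ((le_max_left _ _).trans hh)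
    have hx : ((Λ ∩ cube 0 h).encard : ℝ≥0∞) / ENNReal.ofReal (h ^ r) < 1 :=
      lt_of_le_of_lt (le_iSup (fun x : EuclideanSpace ℝ (Fin d) =>
        ((Λ ∩ cube x h).encard : ℝ≥0∞) / ENNReal.ofReal (h ^ r)) 0) hF
    have hpos : ENNReal.ofReal (h ^ r) ≠ 0 := by
      simp only [ne_eq, ENNReal.ofReal_eq_zero, not_le]
      exact Real.rpow_pos_of_pos (lt_of_lt_of_le one_pos h1) r
    have := (ENNReal.div_lt_iff (Or.inl hpos) (Or.inl ENNReal.ofReal_ne_top)).mp hx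
    rw [one_mul] at this
    exact this.le
  exact hdiv (summable_of_counting Λ γ r H hγ hr0 hrγ hH1 hcount)
end

section
/- Let R be an invertible matrix in M_d(ℝ) and let Λ ⊂ ℝ^d be a countable discrete set. Then dim⁺(Λ) = dim⁺(RΛ), where RΛ = {Rλ : λ ∈ Λ}. -/
open MeasureTheory Filter Set
open scoped ENNReal RealInnerProductSpace ComplexConjugate Pointwise Topology

lemma mulVecE_mulVecE {d : ℕ} (A B : Matrix (Fin d) (Fin d) ℝ)
    (x : EuclideanSpace ℝ (Fin d)) : mulVecE A (mulVecE B x) = mulVecE (A * B) x := by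
  simp [mulVecE, Matrix.mulVec_mulVec]

lemma mulVecE_one {d : ℕ} (x : EuclideanSpace ℝ (Fin d)) : mulVecE 1 x = x := by
  simp [mulVecE]

lemma mulVecE_inv_left {d : ℕ} (R : Matrix (Fin d) (Fin d) ℝ) (hR : R.det ≠ 0)
    (x : EuclideanSpace ℝ (Fin d)) : mulVecE R⁻¹ (mulVecE R x) = x := by
  rw [mulVecE_mulVecE, Matrix.nonsing_inv_mul _ (isUnit_iff_ne_zero.mpr hR), mulVecE_one]

lemma beurlingDensity_pos_image {d : ℕ} (R : Matrix (Fin d) (Fin d) ℝ) (hR : R.det ≠ 0)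
    (Λ : Set (EuclideanSpace ℝ (Fin d))) (r : ℝ)
    (hpos : 0 < beurlingDensity r Λ) : 0 < beurlingDensity r (mulVecE R '' Λ) := by
  classical
  set C : ℝ := 1 + ∑ i, ∑ j, |R i j| with hCdef
  have hsum_nonneg : (0:ℝ) ≤ ∑ i, ∑ j, |R i j| :=
    Finset.sum_nonneg fun i _ => Finset.sum_nonneg fun j _ => abs_nonneg _
  have hC1 : (1:ℝ) ≤ C := by simpa [hCdef] using hsum_nonneg
  have hC0 : (0:ℝ) < C := lt_of_lt_of_le one_pos hC1
  have hrow : ∀ i : Fin d, (∑ j, |R i j|) ≤ C := by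
    intro i
    have : (∑ j, |R i j|) ≤ ∑ i', ∑ j, |R i' j| :=
      Finset.single_le_sum (f := fun i' => ∑ j, |R i' j|)
        (fun i' _ => Finset.sum_nonneg fun j _ => abs_nonneg _) (Finset.mem_univ i)
    linarith
  -- the coordinate description of mulVecE
  have hcoord : ∀ (A : Matrix (Fin d) (Fin d) ℝ) (x : EuclideanSpace ℝ (Fin d)) (i : Fin d),
      mulVecE A x i = ∑ j, A i j * x j := fun _ _ _ => rfl
  -- cube mapping
  have hcube : ∀ (h : ℝ), 0 ≤ h → ∀ (x y : EuclideanSpace ℝ (Fin d)), y ∈ cube x h →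
      mulVecE R y ∈ cube (mulVecE R x) (C * h) := by
    intro h hh x y hy i
    have h1 : mulVecE R y i - mulVecE R x i = ∑ j, R i j * (y j - x j) := by
      rw [hcoord, hcoord, ← Finset.sum_sub_distrib]
      exact Finset.sum_congr rfl fun j _ => by ring
    rw [h1]
    calc |∑ j, R i j * (y j - x j)| ≤ ∑ j, |R i j * (y j - x j)| :=
          Finset.abs_sum_le_sum_abs _ _
      _ = ∑ j, |R i j| * |y j - x j| := by simp [abs_mul]
      _ ≤ ∑ j, |R i j| * h :=
          Finset.sum_le_sum fun j _ => mul_le_mul_of_nonneg_left (hy j) (abs_nonneg _)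
      _ = (∑ j, |R i j|) * h := by rw [← Finset.sum_mul]
      _ ≤ C * h := mul_le_mul_of_nonneg_right (hrow i) hh
  have hinj : Function.Injective (mulVecE R) := by
    intro a b hab
    have := congrArg (mulVecE R⁻¹) hab
    rwa [mulVecE_inv_left R hR, mulVecE_inv_left R hR] at this
  set c : ℝ≥0∞ := ENNReal.ofReal (C ^ r) with hc
  have hCr : (0:ℝ) < C ^ r := Real.rpow_pos_of_pos hC0 r
  have hc0 : c ≠ 0 := by simp [hc, ENNReal.ofReal_pos, hCr]
  have hctop : c ≠ ⊤ := ENNReal.ofReal_ne_top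
  set F : ℝ → ℝ≥0∞ := fun h => ⨆ x : EuclideanSpace ℝ (Fin d),
      ((Λ ∩ cube x h).encard : ℝ≥0∞) / ENNReal.ofReal (h ^ r) with hF
  set G : ℝ → ℝ≥0∞ := fun h => ⨆ x : EuclideanSpace ℝ (Fin d),
      (((mulVecE R '' Λ) ∩ cube x h).encard : ℝ≥0∞) / ENNReal.ofReal (h ^ r) with hG
  have key : ∀ h : ℝ, 0 < h → F h ≤ c * G (C * h) := by
    intro h hh
    apply iSup_le
    intro x
    have hcard : (Λ ∩ cube x h).encard ≤ ((mulVecE R '' Λ) ∩ cube (mulVecE R x) (C * h)).encard := by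
      rw [← Set.InjOn.encard_image (f := mulVecE R) (hinj.injOn)]
      apply Set.encard_le_encard
      rintro _ ⟨y, ⟨hyΛ, hycube⟩, rfl⟩
      exact ⟨Set.mem_image_of_mem _ hyΛ, hcube h hh.le x y hycube⟩
    have hrpow : ENNReal.ofReal ((C * h) ^ r) = c * ENNReal.ofReal (h ^ r) := by
      rw [hc, ← ENNReal.ofReal_mul hCr.le, ← Real.mul_rpow hC0.le hh.le]
    calc ((Λ ∩ cube x h).encard : ℝ≥0∞) / ENNReal.ofReal (h ^ r)
        ≤ (((mulVecE R '' Λ) ∩ cube (mulVecE R x) (C * h)).encard : ℝ≥0∞) /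
            ENNReal.ofReal (h ^ r) := by
          gcongr
      _ = c * ((((mulVecE R '' Λ) ∩ cube (mulVecE R x) (C * h)).encard : ℝ≥0∞) /
            (c * ENNReal.ofReal (h ^ r))) := by
          rw [← mul_div_assoc, ENNReal.mul_div_mul_left _ _ hc0 hctop]
      _ = c * ((((mulVecE R '' Λ) ∩ cube (mulVecE R x) (C * h)).encard : ℝ≥0∞) /
            ENNReal.ofReal ((C * h) ^ r)) := by rw [hrpow]
      _ ≤ c * G (C * h) := by
          gcongr
          exact le_iSup (fun y => (((mulVecE R '' Λ) ∩ cube y (C * h)).encard : ℝ≥0∞) /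
            ENNReal.ofReal ((C * h) ^ r)) (mulVecE R x)
  have hDleq : beurlingDensity r Λ ≤ c * beurlingDensity r (mulVecE R '' Λ) := by
    have h1 : beurlingDensity r Λ ≤ limsup (fun h : ℝ => c * G (C * h)) atTop := by
      refine limsup_le_limsup ?_ isCobounded_le_of_bot isBounded_le_of_top
      filter_upwards [eventually_gt_atTop (0:ℝ)] with h hh
      exact key h hh
    have h2 : limsup (fun h : ℝ => c * G (C * h)) atTop
        = c * limsup (fun h : ℝ => G (C * h)) atTop :=
      ENNReal.limsup_const_mul_of_ne_top hctop
    have h3 : limsup (fun h : ℝ => G (C * h)) atTop ≤ beurlingDensity r (mulVecE R '' Λ) := by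
      have hmap : map (fun h : ℝ => C * h) atTop ≤ atTop :=
        (Tendsto.const_mul_atTop hC0 tendsto_id : Tendsto (fun h : ℝ => C * h) atTop atTop)
      calc limsup (fun h : ℝ => G (C * h)) atTop
          = limsup G (map (fun h : ℝ => C * h) atTop) := limsup_comp G _ _
        _ ≤ limsup G atTop := limsup_le_limsup_of_le hmap
    calc beurlingDensity r Λ ≤ limsup (fun h : ℝ => c * G (C * h)) atTop := h1
      _ = c * limsup (fun h : ℝ => G (C * h)) atTop := h2
      _ ≤ c * beurlingDensity r (mulVecE R '' Λ) := by gcongr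
  by_contra hcon
  rw [pos_iff_ne_zero, not_not] at hcon
  rw [hcon, mul_zero] at hDleq
  exact absurd (le_antisymm hDleq zero_le) (ne_of_gt hpos)

lemma beurlingDim_le_image {d : ℕ} (R : Matrix (Fin d) (Fin d) ℝ) (hR : R.det ≠ 0)
    (Λ : Set (EuclideanSpace ℝ (Fin d))) :
    beurlingDim Λ ≤ beurlingDim (mulVecE R '' Λ) := by
  apply iSup_le
  intro r
  apply iSup_le
  intro hr
  exact le_iSup₂_of_le r ⟨hr.1, beurlingDensity_pos_image R hR Λ r hr.2⟩ le_rfl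

/-- Beurling dimension is invariant under an invertible linear map:
`dim⁺(Λ) = dim⁺(RΛ)`. -/
theorem beurlingDim_image_invertible_matrix
    {d : ℕ} (R : Matrix (Fin d) (Fin d) ℝ) (hR : R.det ≠ 0)
    (Λ : Set (EuclideanSpace ℝ (Fin d))) (hΛ : Λ.Countable) :
    beurlingDim Λ = beurlingDim (mulVecE R '' Λ) := by
  refine le_antisymm (beurlingDim_le_image R hR Λ) ?_
  have hRinv : (R⁻¹).det ≠ 0 := by
    rw [Matrix.det_nonsing_inv, Ring.inverse_eq_inv]
    exact inv_ne_zero hR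
  have himg : mulVecE R⁻¹ '' (mulVecE R '' Λ) = Λ := by
    rw [Set.image_image]
    simp only [mulVecE_inv_left R hR, Set.image_id']
  have := beurlingDim_le_image R⁻¹ hRinv (mulVecE R '' Λ)
  rwa [himg] at this
end

section
/- Let μ be a Borel probability measure on ℝ^d whose periodic zero set Z(μ) is empty. Then there exist ε > 0 and δ > 0 such that for every ξ ∈ [0,1]^d there exists k_ξ ∈ ℤ^d with |μ̂(ξ + y + k_ξ)| ≥ ε whenever |y| < δ; moreover, for ξ = 0 one can take k_0 = 0. -/
open MeasureTheory Filter Set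
open scoped ENNReal RealInnerProductSpace ComplexConjugate Pointwise Topology

/-- If the periodic zero set of a probability measure `μ` is empty, then
there are `ε, δ > 0` such that for every `ξ ∈ [0,1]^d` there is `k_ξ ∈ ℤ^d` (with `k_0 = 0`)
such that `|μ̂(ξ + y + k_ξ)| ≥ ε` whenever `|y| < δ`. -/
theorem equi_positive_of_empty_periodic_zero_set
    {d : ℕ} (μ : MeasureTheory.Measure (EuclideanSpace ℝ (Fin d)))
    (hprob : MeasureTheory.IsProbabilityMeasure μ)
    (hZ : periodicZeroSet μ = ∅) :
    ∃ ε : ℝ, 0 < ε ∧ ∃ δ : ℝ, 0 < δ ∧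
      ∃ k : EuclideanSpace ℝ (Fin d) → (Fin d → ℤ), k 0 = 0 ∧
        ∀ ξ : EuclideanSpace ℝ (Fin d), (∀ i, 0 ≤ ξ i ∧ ξ i ≤ 1) →
          ∀ y : EuclideanSpace ℝ (Fin d), ‖y‖ < δ →
            ε ≤ ‖muHat μ (ξ + y + intCast (k ξ))‖ := by
  classical
  have hcont : Continuous (muHat μ) := by
    refine MeasureTheory.continuous_of_dominated (bound := fun _ => (1:ℝ))
      (fun ξ => ?_) (fun ξ => ?_) ?_ ?_
    · exact (Complex.continuous_exp.comp
        ((Complex.continuous_ofReal.comp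
          ((continuous_const.mul (continuous_const.inner continuous_id)).neg)).mul
          continuous_const)).aestronglyMeasurable
    · filter_upwards with x
      rw [Complex.norm_exp_ofReal_mul_I]
    · exact integrable_const 1
    · filter_upwards with x
      exact Complex.continuous_exp.comp
        ((Complex.continuous_ofReal.comp
          ((continuous_const.mul ((continuous_id.inner continuous_const))).neg)).mul
          continuous_const)
  have h0 : muHat μ 0 = 1 := by
    unfold muHat
    simp [inner_zero_left]
  have hic0 : intCast (0 : Fin d → ℤ) = 0 := by
    unfold intCast; simp; rfl
  set C : Set (EuclideanSpace ℝ (Fin d)) := {ξ | ∀ i, 0 ≤ ξ i ∧ ξ i ≤ 1} with hCdef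
  have hC : IsCompact C := by
    have h : C = ⇑(EuclideanSpace.equiv (Fin d) ℝ).toHomeomorph ⁻¹'
        (Set.univ.pi fun _ => Icc 0 1) := by
      ext ξ; simp [hCdef, Set.mem_pi, Icc, and_comm]
    rw [h, Homeomorph.isCompact_preimage]
    exact isCompact_univ_pi fun _ => isCompact_Icc
  have hne : ∀ ξ : EuclideanSpace ℝ (Fin d), ∃ k : Fin d → ℤ, muHat μ (ξ + intCast k) ≠ 0 := by
    intro ξ
    by_contra h
    push_neg at h
    have : ξ ∈ periodicZeroSet μ := fun kk => h kk
    rw [hZ] at this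
    exact this
  choose kc hkc using hne
  set ep : EuclideanSpace ℝ (Fin d) → ℝ := fun ξ => ‖muHat μ (ξ + intCast (kc ξ))‖ with hep
  have hep_pos : ∀ ξ, 0 < ep ξ := fun ξ => norm_pos_iff.mpr (hkc ξ)
  set U : EuclideanSpace ℝ (Fin d) → Set (EuclideanSpace ℝ (Fin d)) :=
    fun ξ => {η | ep ξ / 2 < ‖muHat μ (η + intCast (kc ξ))‖} with hU
  have hUopen : ∀ ξ, IsOpen (U ξ) := fun ξ =>
    isOpen_lt continuous_const ((hcont.comp (continuous_id.add continuous_const)).norm)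
  have hmemU : ∀ ξ, ξ ∈ U ξ := fun ξ => half_lt_self (hep_pos ξ)
  obtain ⟨t, ht⟩ := hC.elim_finite_subcover U hUopen
    (fun ξ _ => mem_iUnion.mpr ⟨ξ, hmemU ξ⟩)
  have hcover : C ⊆ ⋃ i : ↥t, U i := by
    intro ξ hξ
    obtain ⟨i, hi, h⟩ := mem_iUnion₂.mp (ht hξ)
    exact mem_iUnion.mpr ⟨⟨i, hi⟩, h⟩
  obtain ⟨δL, hδL, hleb⟩ :=
    lebesgue_number_lemma_of_metric hC (fun i : ↥t => hUopen i) hcover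
  have h0C : (0 : EuclideanSpace ℝ (Fin d)) ∈ C := by
    intro i; constructor <;> simp
  have htne : t.Nonempty := by
    obtain ⟨i, _⟩ := hleb 0 h0C
    exact ⟨i.1, i.2⟩
  -- neighborhood of 0 where |μ̂| > 1/2
  have hopenV : IsOpen {η : EuclideanSpace ℝ (Fin d) | (1:ℝ)/2 < ‖muHat μ η‖} :=
    isOpen_lt continuous_const hcont.norm
  have h0V : (0 : EuclideanSpace ℝ (Fin d)) ∈ {η | (1:ℝ)/2 < ‖muHat μ η‖} := by
    rw [mem_setOf_eq, h0]; norm_num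
  obtain ⟨δ0, hδ0, hball0⟩ := Metric.isOpen_iff.mp hopenV 0 h0V
  refine ⟨min ((1:ℝ)/2) (t.inf' htne fun ξ => ep ξ / 2), ?_, min δ0 δL, lt_min hδ0 hδL,
    fun ξ => if h : ξ ∈ C ∧ ξ ≠ 0 then kc (Classical.choose (hleb ξ h.1) : ↥t) else 0,
    ?_, ?_⟩
  · refine lt_min (by norm_num) ?_
    rw [Finset.lt_inf'_iff]
    exact fun ξ _ => half_pos (hep_pos ξ)
  · simp
  · intro ξ hξC y hy
    by_cases hξ0 : ξ = 0
    · subst hξ0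
      dsimp only
      rw [dif_neg (by simp)]
      rw [hic0, zero_add, add_zero]
      have hyb : y ∈ Metric.ball (0 : EuclideanSpace ℝ (Fin d)) δ0 := by
        rw [Metric.mem_ball, dist_zero_right]
        exact lt_of_lt_of_le hy (min_le_left _ _)
      exact le_trans (min_le_left _ _) (le_of_lt (hball0 hyb))
    · have hξC' : ξ ∈ C := hξC
      dsimp only
      rw [dif_pos ⟨hξC', hξ0⟩]
      set i := Classical.choose (hleb ξ hξC') with hi
      have hspec : Metric.ball ξ δL ⊆ U i := Classical.choose_spec (hleb ξ hξC')
      have hmem : ξ + y ∈ U i := by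
        apply hspec
        rw [Metric.mem_ball, dist_eq_norm, add_sub_cancel_left]
        exact lt_of_lt_of_le hy (min_le_right _ _)
      refine le_trans (min_le_right _ _) (le_trans ?_ (le_of_lt hmem))
      exact Finset.inf'_le _ i.2
end

section
/- Suppose (R, B, L) forms a Hadamard triple on ℝ^d. Then for every n ≥ 1, the triple (Rⁿ, 𝐁_n, 𝐋_n) is also a Hadamard triple, where 𝐁_n = B + RB + ⋯ + R^{n-1}B and 𝐋_n = L + RᵗL + ⋯ + (Rᵗ)^{n-1}L. -/
open MeasureTheory Filter Set
open scoped ENNReal RealInnerProductSpace ComplexConjugate Pointwise Topology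

section HadamardAux
open Matrix Complex Finset
open scoped ComplexConjugate Pointwise

namespace HadAux

variable {d : ℕ}

noncomputable def ee (x : ℝ) : ℂ := Complex.exp (((-(2 * Real.pi * x) : ℝ) : ℂ) * Complex.I)

lemma ee_add (x y : ℝ) : ee (x + y) = ee x * ee y := by
  rw [ee, ee, ee, ← Complex.exp_add]; congr 1; push_cast; ring

lemma ee_zero : ee 0 = 1 := by simp [ee]

lemma ee_int (m : ℤ) : ee m = 1 := by
  rw [ee]
  have : ((-(2 * Real.pi * (m:ℝ)) : ℝ) : ℂ) * Complex.I = (-m : ℤ) * (2 * Real.pi * Complex.I) := by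
    push_cast; ring
  rw [this, Complex.exp_int_mul_two_pi_mul_I]

lemma ee_add_int (x : ℝ) (m : ℤ) : ee (x + m) = ee x := by rw [ee_add, ee_int, mul_one]

lemma conj_ee (x : ℝ) : conj (ee x) = ee (-x) := by
  rw [ee, ee, ← Complex.exp_conj]
  congr 1
  rw [_root_.map_mul, Complex.conj_I, Complex.conj_ofReal]
  push_cast; ring

lemma conj_ee_mul_ee (x y : ℝ) : conj (ee x) * ee y = ee (y - x) := by
  rw [conj_ee, ← ee_add]; congr 1; ring

/-- cast of an integer vector -/
def cv (v : Fin d → ℤ) : Fin d → ℝ := fun i => (v i : ℝ)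

lemma cv_add (v w : Fin d → ℤ) : cv (v + w) = cv v + cv w := by
  funext i; simp [cv]

lemma cv_zero : cv (0 : Fin d → ℤ) = 0 := by funext i; simp [cv]

lemma cv_inj : Function.Injective (cv (d := d)) := fun v w h =>
  funext fun i => by have := congrFun h i; simpa [cv] using this

lemma cv_mulVec (M : Matrix (Fin d) (Fin d) ℤ) (v : Fin d → ℤ) :
    cv (M *ᵥ v) = matR M *ᵥ cv v := by
  funext i
  simp [cv, matR, Matrix.mulVec, dotProduct]

lemma cv_dot (v w : Fin d → ℤ) : cv v ⬝ᵥ cv w = ((v ⬝ᵥ w : ℤ) : ℝ) := by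
  simp [cv, dotProduct]

lemma matR_pow (R : Matrix (Fin d) (Fin d) ℤ) (n : ℕ) : matR (R ^ n) = matR R ^ n := by
  have : matR (R ^ n) = (Int.castRingHom ℝ).mapMatrix (R ^ n) := rfl
  rw [this, map_pow]; rfl

lemma matR_transpose (R : Matrix (Fin d) (Fin d) ℤ) : matR Rᵀ = (matR R)ᵀ := rfl

end HadAux
end HadamardAux
section HadamardAux2
open Matrix Complex Finset
open scoped ComplexConjugate Pointwise
namespace HadAux

variable {d : ℕ}

lemma hM_apply (R : Matrix (Fin d) (Fin d) ℤ) (B L : Finset (Fin d → ℤ))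
    (b : {b // b ∈ B}) (l : {l // l ∈ L}) :
    hadamardMatrix R B L b l
      = ((1 / Real.sqrt B.card : ℝ) : ℂ) * ee ((matR R)⁻¹ *ᵥ cv (b : Fin d → ℤ) ⬝ᵥ cv (l : Fin d → ℤ)) := rfl

lemma term_eq (R : Matrix (Fin d) (Fin d) ℤ) (B L : Finset (Fin d → ℤ))
    (b : {b // b ∈ B}) (l l' : {l // l ∈ L}) :
    conj (hadamardMatrix R B L b l) * hadamardMatrix R B L b l'
      = ((B.card : ℂ))⁻¹ *
        ee ((matR R)⁻¹ *ᵥ cv (b : Fin d → ℤ) ⬝ᵥ (cv (l' : Fin d → ℤ) - cv (l : Fin d → ℤ))) := by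
  rw [hM_apply, hM_apply, _root_.map_mul, Complex.conj_ofReal, conj_ee]
  have h1 : ((1 / Real.sqrt B.card : ℝ) : ℂ) * ee (-((matR R)⁻¹ *ᵥ cv (b : Fin d → ℤ) ⬝ᵥ cv (l : Fin d → ℤ)))
      * (((1 / Real.sqrt B.card : ℝ) : ℂ) * ee ((matR R)⁻¹ *ᵥ cv (b : Fin d → ℤ) ⬝ᵥ cv (l' : Fin d → ℤ)))
      = (((1 / Real.sqrt B.card) * (1 / Real.sqrt B.card) : ℝ) : ℂ)
        * (ee (-((matR R)⁻¹ *ᵥ cv (b : Fin d → ℤ) ⬝ᵥ cv (l : Fin d → ℤ)))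
            * ee ((matR R)⁻¹ *ᵥ cv (b : Fin d → ℤ) ⬝ᵥ cv (l' : Fin d → ℤ))) := by
    push_cast; ring
  rw [h1, ← ee_add]
  congr 1
  · have : (1 / Real.sqrt B.card) * (1 / Real.sqrt B.card) = (B.card : ℝ)⁻¹ := by
      rw [div_mul_div_comm, one_mul, Real.mul_self_sqrt (by positivity), one_div]
    rw [this]; push_cast; simp
  · congr 1
    rw [dotProduct_sub]; ring

lemma sum_entry {R : Matrix (Fin d) (Fin d) ℤ} {B L : Finset (Fin d → ℤ)}
    (hH : IsHadamardTriple R B L) {l l' : Fin d → ℤ} (hl : l ∈ L) (hl' : l' ∈ L) :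
    ∑ b ∈ B, ee ((matR R)⁻¹ *ᵥ cv b ⬝ᵥ (cv l' - cv l)) = if l = l' then (B.card : ℂ) else 0 := by
  have hq : B.card ≠ 0 := by
    intro h0
    rw [hH.1, Finset.card_eq_zero] at h0
    rw [h0] at hl
    exact absurd hl (Finset.notMem_empty _)
  have h := congrFun (congrFun hH.2 ⟨l, hl⟩) ⟨l', hl'⟩
  rw [Matrix.mul_apply, Matrix.one_apply] at h
  simp only [Matrix.conjTranspose_apply, ← starRingEnd_apply, term_eq] at h
  rw [← Finset.mul_sum] at h
  have hsum : ∑ b : {b // b ∈ B}, ee ((matR R)⁻¹ *ᵥ cv (b : Fin d → ℤ) ⬝ᵥ (cv l' - cv l))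
      = ∑ b ∈ B, ee ((matR R)⁻¹ *ᵥ cv b ⬝ᵥ (cv l' - cv l)) := Finset.sum_coe_sort B (fun v => ee ((matR R)⁻¹ *ᵥ cv v ⬝ᵥ (cv l' - cv l)))
  rw [hsum] at h
  have hq' : ((B.card : ℂ)) ≠ 0 := Nat.cast_ne_zero.mpr hq
  have := congrArg (fun z => (B.card : ℂ) * z) h
  rw [← mul_assoc, mul_inv_cancel₀ hq', one_mul] at this
  rw [this]
  by_cases he : l = l'
  · have : (⟨l, hl⟩ : {x // x ∈ L}) = ⟨l', hl'⟩ := Subtype.ext he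
    rw [if_pos this, if_pos he, mul_one]
  · have : (⟨l, hl⟩ : {x // x ∈ L}) ≠ ⟨l', hl'⟩ := fun hc => he (congrArg Subtype.val hc)
    rw [if_neg this, if_neg he, mul_zero]

lemma triple_of_sum {R : Matrix (Fin d) (Fin d) ℤ} {B L : Finset (Fin d → ℤ)}
    (hcard : B.card = L.card)
    (h : ∀ l ∈ L, ∀ l' ∈ L,
      ∑ b ∈ B, ee ((matR R)⁻¹ *ᵥ cv b ⬝ᵥ (cv l' - cv l)) = if l = l' then (B.card : ℂ) else 0) :
    IsHadamardTriple R B L := by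
  refine ⟨hcard, ?_⟩
  ext ⟨l, hl⟩ ⟨l', hl'⟩
  rw [Matrix.mul_apply, Matrix.one_apply]
  simp only [Matrix.conjTranspose_apply, ← starRingEnd_apply, term_eq]
  rw [← Finset.mul_sum, Finset.sum_coe_sort _ (fun v => ee ((matR R)⁻¹ *ᵥ cv v ⬝ᵥ (cv l' - cv l))), h l hl l' hl']
  have hq : B.card ≠ 0 := by
    intro h0
    rw [hcard, Finset.card_eq_zero] at h0
    rw [h0] at hl
    exact absurd hl (Finset.notMem_empty _)
  have hq' : ((B.card : ℂ)) ≠ 0 := Nat.cast_ne_zero.mpr hq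
  by_cases he : l = l'
  · rw [if_pos he, if_pos (Subtype.ext he : (⟨l, hl⟩ : {x // x ∈ L}) = ⟨l', hl'⟩),
      inv_mul_cancel₀ hq']
  · rw [if_neg he, if_neg (fun hc => he (congrArg Subtype.val hc) :
      ¬ (⟨l, hl⟩ : {x // x ∈ L}) = ⟨l', hl'⟩), mul_zero]

end HadAux
end HadamardAux2
section HadamardAux3
open Matrix Complex Finset
open scoped ComplexConjugate Pointwise
namespace HadAux

variable {d : ℕ}

lemma dot_transpose_mulVec (M : Matrix (Fin d) (Fin d) ℝ) (u w : Fin d → ℝ) :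
    (Mᵀ *ᵥ u) ⬝ᵥ w = (M *ᵥ w) ⬝ᵥ u := by
  rw [Matrix.mulVec_transpose, ← Matrix.dotProduct_mulVec, dotProduct_comm]

lemma mul_comm_one {R : Matrix (Fin d) (Fin d) ℤ} {B L : Finset (Fin d → ℤ)}
    (hH : IsHadamardTriple R B L) :
    hadamardMatrix R B L * (hadamardMatrix R B L)ᴴ = 1 := by
  have e : {b // b ∈ B} ≃ {l // l ∈ L} :=
    Fintype.equivOfCardEq (by simpa [Fintype.card_coe] using hH.1)
  exact (Matrix.mul_eq_one_comm_of_equiv e).mpr hH.2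

lemma hM_transpose {R : Matrix (Fin d) (Fin d) ℤ} {B L : Finset (Fin d → ℤ)}
    (hcard : B.card = L.card) (l : {l // l ∈ L}) (b : {b // b ∈ B}) :
    hadamardMatrix Rᵀ L B l b = hadamardMatrix R B L b l := by
  rw [hM_apply, hM_apply, hcard]
  congr 2
  rw [matR_transpose, ← Matrix.transpose_nonsing_inv, dot_transpose_mulVec]

lemma triple_transpose {R : Matrix (Fin d) (Fin d) ℤ} {B L : Finset (Fin d → ℤ)}
    (hH : IsHadamardTriple R B L) : IsHadamardTriple Rᵀ L B := by
  refine ⟨hH.1.symm, ?_⟩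
  have hc := mul_comm_one hH
  ext b b'
  rw [Matrix.mul_apply]
  have h := congrFun (congrFun hc b') b
  rw [Matrix.mul_apply] at h
  calc ∑ l, (hadamardMatrix Rᵀ L B)ᴴ b l * hadamardMatrix Rᵀ L B l b'
      = ∑ l, hadamardMatrix R B L b' l * (hadamardMatrix R B L)ᴴ l b := by
        refine Finset.sum_congr rfl fun l _ => ?_
        rw [Matrix.conjTranspose_apply, Matrix.conjTranspose_apply,
          hM_transpose hH.1, hM_transpose hH.1, mul_comm]
    _ = (1 : Matrix {b // b ∈ B} {b // b ∈ B} ℂ) b' b := h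
    _ = (1 : Matrix {b // b ∈ B} {b // b ∈ B} ℂ) b b' := by
        rw [Matrix.one_apply, Matrix.one_apply]
        by_cases hbb : b = b'
        · rw [if_pos hbb.symm, if_pos hbb]
        · rw [if_neg (fun hc' => hbb hc'.symm), if_neg hbb]

end HadAux
end HadamardAux3
section HadamardAux4
open Matrix Complex Finset
open scoped ComplexConjugate Pointwise
namespace HadAux

variable {d : ℕ}

lemma dot_mulVec_transpose (M : Matrix (Fin d) (Fin d) ℝ) (u w : Fin d → ℝ) :
    u ⬝ᵥ (Mᵀ *ᵥ w) = (M *ᵥ u) ⬝ᵥ w := by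
  rw [dotProduct_comm, dot_transpose_mulVec]

lemma decomp_inj {R : Matrix (Fin d) (Fin d) ℤ} {B L : Finset (Fin d → ℤ)}
    (hH : IsHadamardTriple R B L) (hdet : (matR R).det ≠ 0)
    {b b' β β' : Fin d → ℤ} (hb : b ∈ B) (hb' : b' ∈ B)
    (h : b + R *ᵥ β = b' + R *ᵥ β') : b = b' ∧ β = β' := by
  have hdu : IsUnit (matR R).det := isUnit_iff_ne_zero.mpr hdet
  by_cases hbb : b = b'
  · subst hbb
    refine ⟨rfl, ?_⟩
    have h2 : R *ᵥ β = R *ᵥ β' := by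
      have := add_left_cancel h
      exact this
    have h3 : matR R *ᵥ cv β = matR R *ᵥ cv β' := by
      rw [← cv_mulVec, ← cv_mulVec, h2]
    have h4 : cv β = cv β' := by
      have := congrArg (fun v => (matR R)⁻¹ *ᵥ v) h3
      simpa [Matrix.mulVec_mulVec, Matrix.nonsing_inv_mul _ hdu] using this
    exact cv_inj h4
  · exfalso
    -- b = b' + R *ᵥ (β' - β)
    have hm : b = b' + R *ᵥ (β' - β) := by
      have : b + R *ᵥ β - R *ᵥ β = b' + R *ᵥ β' - R *ᵥ β := by rw [h]
      rw [add_sub_cancel_right] at this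
      rw [this, Matrix.mulVec_sub]
      abel
    -- rows b and b' of H are equal
    have hrow : ∀ l : {l // l ∈ L},
        hadamardMatrix R B L ⟨b, hb⟩ l = hadamardMatrix R B L ⟨b', hb'⟩ l := by
      intro l
      rw [hM_apply, hM_apply]
      congr 1
      have hcv : cv b = cv b' + matR R *ᵥ cv (β' - β) := by
        rw [hm, cv_add, cv_mulVec]
      have : (matR R)⁻¹ *ᵥ cv b ⬝ᵥ cv (l : Fin d → ℤ)
          = (matR R)⁻¹ *ᵥ cv b' ⬝ᵥ cv (l : Fin d → ℤ) + (((β' - β) ⬝ᵥ (l : Fin d → ℤ) : ℤ) : ℝ) := by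
        rw [hcv, Matrix.mulVec_add, add_dotProduct, Matrix.mulVec_mulVec,
          Matrix.nonsing_inv_mul _ hdu, Matrix.one_mulVec, cv_dot]
      rw [this, ee_add_int]
    have hc := mul_comm_one hH
    have h0 := congrFun (congrFun hc ⟨b, hb⟩) ⟨b', hb'⟩
    have h1 := congrFun (congrFun hc ⟨b, hb⟩) ⟨b, hb⟩
    rw [Matrix.mul_apply, Matrix.one_apply] at h0 h1
    have hne : (⟨b, hb⟩ : {x // x ∈ B}) ≠ ⟨b', hb'⟩ := fun hc' => hbb (congrArg Subtype.val hc')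
    rw [if_neg hne] at h0
    rw [if_pos rfl] at h1
    have heq : ∑ l, hadamardMatrix R B L ⟨b, hb⟩ l * (hadamardMatrix R B L)ᴴ l ⟨b', hb'⟩
        = ∑ l, hadamardMatrix R B L ⟨b, hb⟩ l * (hadamardMatrix R B L)ᴴ l ⟨b, hb⟩ := by
      refine Finset.sum_congr rfl fun l _ => ?_
      rw [Matrix.conjTranspose_apply, Matrix.conjTranspose_apply, hrow l]
    rw [heq, h1] at h0
    exact one_ne_zero h0

end HadAux
end HadamardAux4
section HadamardAux5
open Matrix Complex Finset
open scoped ComplexConjugate Pointwise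
namespace HadAux

variable {d : ℕ}

lemma mem_iterSum_succ {R : Matrix (Fin d) (Fin d) ℤ} {B : Finset (Fin d → ℤ)} {n : ℕ}
    {v : Fin d → ℤ} :
    v ∈ iterSum R B (n + 1) ↔ ∃ b ∈ B, ∃ w ∈ iterSum R B n, v = b + R *ᵥ w := by
  show v ∈ B + (iterSum R B n).image (fun w => R.mulVec w) ↔ _
  rw [Finset.mem_add]
  constructor
  · rintro ⟨b, hb, z, hz, rfl⟩
    rw [Finset.mem_image] at hz
    obtain ⟨w, hw, rfl⟩ := hz
    exact ⟨b, hb, w, hw, rfl⟩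
  · rintro ⟨b, hb, w, hw, rfl⟩
    exact ⟨b, hb, R *ᵥ w, Finset.mem_image_of_mem _ hw, rfl⟩

lemma mem_iterSum_succ' {R : Matrix (Fin d) (Fin d) ℤ} {B : Finset (Fin d → ℤ)} :
    ∀ n : ℕ, ∀ {v : Fin d → ℤ},
    (v ∈ iterSum R B (n + 1) ↔ ∃ w ∈ iterSum R B n, ∃ b ∈ B, v = w + (R ^ n) *ᵥ b)
  | 0, v => by
    rw [mem_iterSum_succ]
    constructor
    · rintro ⟨b, hb, w, hw, rfl⟩
      have : w = 0 := by simpa [iterSum] using hw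
      subst this
      exact ⟨0, by simp [iterSum], b, hb, by simp [Matrix.mulVec_zero, Matrix.one_mulVec]⟩
    · rintro ⟨w, hw, b, hb, rfl⟩
      have : w = 0 := by simpa [iterSum] using hw
      subst this
      exact ⟨b, hb, 0, by simp [iterSum], by simp [Matrix.mulVec_zero, Matrix.one_mulVec]⟩
  | (n+1), v => by
    rw [mem_iterSum_succ]
    constructor
    · rintro ⟨b, hb, w, hw, rfl⟩
      rw [mem_iterSum_succ' n] at hw
      obtain ⟨u, hu, b', hb', rfl⟩ := hw
      refine ⟨b + R *ᵥ u, mem_iterSum_succ.mpr ⟨b, hb, u, hu, rfl⟩, b', hb', ?_⟩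
      rw [Matrix.mulVec_add, Matrix.mulVec_mulVec, ← pow_succ']
      abel
    · rintro ⟨w, hw, b', hb', rfl⟩
      rw [mem_iterSum_succ] at hw
      obtain ⟨b, hb, u, hu, rfl⟩ := hw
      refine ⟨b, hb, u + (R ^ n) *ᵥ b', mem_iterSum_succ' n |>.mpr ⟨u, hu, b', hb', rfl⟩, ?_⟩
      rw [Matrix.mulVec_add, Matrix.mulVec_mulVec, ← pow_succ']
      abel

lemma sum_iterSum_succ {R : Matrix (Fin d) (Fin d) ℤ} {B L : Finset (Fin d → ℤ)}
    (hH : IsHadamardTriple R B L) (hdet : (matR R).det ≠ 0) (n : ℕ)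
    {M : Type*} [AddCommMonoid M] (f : (Fin d → ℤ) → M) :
    ∑ v ∈ iterSum R B (n + 1), f v
      = ∑ p ∈ B ×ˢ iterSum R B n, f (p.1 + R *ᵥ p.2) := by
  refine (Finset.sum_bij (fun p _ => p.1 + R *ᵥ p.2) ?_ ?_ ?_ ?_).symm
  · rintro ⟨b, β⟩ hp
    rw [Finset.mem_product] at hp
    exact mem_iterSum_succ.mpr ⟨b, hp.1, β, hp.2, rfl⟩
  · rintro ⟨b, β⟩ hp ⟨b', β'⟩ hp' he
    rw [Finset.mem_product] at hp hp'
    obtain ⟨h1, h2⟩ := decomp_inj hH hdet hp.1 hp'.1 he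
    exact Prod.ext h1 h2
  · intro v hv
    obtain ⟨b, hb, w, hw, rfl⟩ := mem_iterSum_succ.mp hv
    exact ⟨(b, w), Finset.mem_product.mpr ⟨hb, hw⟩, rfl⟩
  · intro p hp; rfl

lemma card_iterSum {R : Matrix (Fin d) (Fin d) ℤ} {B L : Finset (Fin d → ℤ)}
    (hH : IsHadamardTriple R B L) (hdet : (matR R).det ≠ 0) :
    ∀ n : ℕ, (iterSum R B n).card = B.card ^ n
  | 0 => by simp [iterSum]
  | (n+1) => by
    have h1 : (iterSum R B (n+1)).card = ∑ v ∈ iterSum R B (n+1), 1 := by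
      rw [Finset.card_eq_sum_ones]
    rw [h1, sum_iterSum_succ hH hdet n, Finset.sum_const, Finset.card_product,
      card_iterSum hH hdet n]
    rw [smul_eq_mul, mul_one, pow_succ, mul_comm]

end HadAux
end HadamardAux5
section HadamardAux6
open Matrix Complex Finset
open scoped ComplexConjugate Pointwise
namespace HadAux

variable {d : ℕ}

lemma inv_succ_mul (S : Matrix (Fin d) (Fin d) ℝ) (hS : IsUnit S.det) (n : ℕ) :
    (S ^ (n+1))⁻¹ * S = (S ^ n)⁻¹ := by
  rw [← Matrix.inv_pow', pow_succ, mul_assoc, Matrix.nonsing_inv_mul _ hS, mul_one,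
    Matrix.inv_pow']

lemma pow_mul_inv_succ (S : Matrix (Fin d) (Fin d) ℝ) (hS : IsUnit S.det) (n : ℕ) :
    S ^ n * (S ^ (n+1))⁻¹ = S⁻¹ := by
  rw [← Matrix.inv_pow', pow_succ, ← mul_assoc, Matrix.inv_pow',
    Matrix.mul_nonsing_inv _ (by rw [Matrix.det_pow]; exact hS.pow n), one_mul]

lemma pow_mul_inv_self (S : Matrix (Fin d) (Fin d) ℝ) (hS : IsUnit S.det) (n : ℕ) :
    S ^ n * (S ^ n)⁻¹ = 1 :=
  Matrix.mul_nonsing_inv _ (by rw [Matrix.det_pow]; exact hS.pow n)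

lemma cv_sub (v w : Fin d → ℤ) : cv (v - w) = cv v - cv w := by
  funext i; simp [cv]

lemma matR_transpose_pow (R : Matrix (Fin d) (Fin d) ℤ) (n : ℕ) :
    matR (Rᵀ ^ n) = ((matR R) ^ n)ᵀ := by
  rw [← Matrix.transpose_pow, ← matR_pow, matR_transpose]

lemma det_ne_zero_of_expansive {R : Matrix (Fin d) (Fin d) ℤ} (hR : IsExpansive R) :
    (matR R).det ≠ 0 := by
  intro h0
  have hdet : R.det = 0 := by
    have h1 : (matR R).det = ((R.det : ℤ) : ℝ) := by
      have : matR R = (Int.castRingHom ℝ).mapMatrix R := rfl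
      rw [this, ← RingHom.map_det]; rfl
    rw [h1] at h0
    exact_mod_cast h0
  have hdetC : (R.map (Int.cast : ℤ → ℂ)).det = 0 := by
    have h1 : (R.map (Int.cast : ℤ → ℂ)).det = ((R.det : ℤ) : ℂ) := by
      have : R.map (Int.cast : ℤ → ℂ) = (Int.castRingHom ℂ).mapMatrix R := rfl
      rw [this, ← RingHom.map_det]; rfl
    rw [h1, hdet]; simp
  have hroot : (R.map (Int.cast : ℤ → ℂ)).charpoly.IsRoot 0 := by
    have h2 := Matrix.det_eq_sign_charpoly_coeff (R.map (Int.cast : ℤ → ℂ))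
    rw [hdetC] at h2
    have h3 : (R.map (Int.cast : ℤ → ℂ)).charpoly.coeff 0 = 0 := by
      rcases mul_eq_zero.mp h2.symm with h | h
      · exact absurd h (pow_ne_zero _ (by norm_num))
      · exact h
    rwa [Polynomial.coeff_zero_eq_eval_zero] at h3
  have := hR 0 hroot
  rw [norm_zero] at this
  exact absurd this (by norm_num)

lemma main_triple {R : Matrix (Fin d) (Fin d) ℤ} {B L : Finset (Fin d → ℤ)}
    (hH : IsHadamardTriple R B L) (hdet : (matR R).det ≠ 0) :
    ∀ n : ℕ, IsHadamardTriple (R ^ n) (iterSum R B n) (iterSum Rᵀ L n)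
  | 0 => by
    refine triple_of_sum rfl ?_
    intro l hl l' hl'
    have hl0 : l = 0 := by simpa [iterSum] using hl
    have hl'0 : l' = 0 := by simpa [iterSum] using hl'
    subst hl0; subst hl'0
    simp [iterSum, cv_zero, ee_zero]
  | (n+1) => by
    have IH := main_triple hH hdet n
    have hdu : IsUnit (matR R).det := isUnit_iff_ne_zero.mpr hdet
    have hdetT : (matR Rᵀ).det ≠ 0 := by
      rw [matR_transpose, Matrix.det_transpose]; exact hdet
    have hdetn : (matR (R ^ n)).det ≠ 0 := by
      rw [matR_pow, Matrix.det_pow]; exact pow_ne_zero _ hdet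
    have hdetnT : (matR ((R ^ n)ᵀ)).det ≠ 0 := by
      rw [matR_transpose, Matrix.det_transpose]; exact hdetn
    have hTt := triple_transpose hH
    have hIHt := triple_transpose IH
    have hcB := card_iterSum hH hdet
    have hcL := card_iterSum hTt hdetT
    refine triple_of_sum (by rw [hcB (n+1), hcL (n+1), hH.1]) ?_
    intro x hx y hy
    obtain ⟨lx, hlx, ex, hex, hxe⟩ := (mem_iterSum_succ' n).mp hx
    obtain ⟨ly, hly, ey, hey, hye⟩ := (mem_iterSum_succ' n).mp hy
    have hq : B.card ≠ 0 := by rw [hH.1]; exact Finset.card_ne_zero_of_mem hex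
    rw [sum_iterSum_succ hH hdet n, Finset.sum_product]
    -- exponent splitting
    have hterm : ∀ b ∈ B, ∀ β ∈ iterSum R B n,
        ee ((matR (R^(n+1)))⁻¹ *ᵥ cv (b + R *ᵥ β) ⬝ᵥ (cv y - cv x))
          = ee ((matR (R^(n+1)))⁻¹ *ᵥ cv b ⬝ᵥ (cv ly - cv lx)
                + (matR R)⁻¹ *ᵥ cv b ⬝ᵥ (cv ey - cv ex))
            * ee ((matR (R^n))⁻¹ *ᵥ cv β ⬝ᵥ (cv ly - cv lx)) := by
      intro b hb β hβ
      have hΔ : cv y - cv x = (cv ly - cv lx) + ((matR R)^n)ᵀ *ᵥ (cv ey - cv ex) := by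
        rw [hxe, hye, cv_add, cv_add, cv_mulVec, cv_mulVec, matR_transpose_pow,
          Matrix.mulVec_sub]
        abel
      have hsplit : (matR (R^(n+1)))⁻¹ *ᵥ cv (b + R *ᵥ β)
          = (matR (R^(n+1)))⁻¹ *ᵥ cv b + (matR (R^n))⁻¹ *ᵥ cv β := by
        rw [cv_add, cv_mulVec, Matrix.mulVec_add, Matrix.mulVec_mulVec, matR_pow, matR_pow,
          inv_succ_mul _ hdu n]
      have hdot : (matR (R^(n+1)))⁻¹ *ᵥ cv (b + R *ᵥ β) ⬝ᵥ (cv y - cv x)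
          = ((matR (R^(n+1)))⁻¹ *ᵥ cv b ⬝ᵥ (cv ly - cv lx)
              + (matR R)⁻¹ *ᵥ cv b ⬝ᵥ (cv ey - cv ex))
            + (matR (R^n))⁻¹ *ᵥ cv β ⬝ᵥ (cv ly - cv lx)
            + ((β ⬝ᵥ (ey - ex) : ℤ) : ℝ) := by
        rw [hsplit, hΔ, add_dotProduct, dotProduct_add, dotProduct_add,
          dot_mulVec_transpose, dot_mulVec_transpose, Matrix.mulVec_mulVec,
          Matrix.mulVec_mulVec]
        rw [matR_pow, matR_pow, pow_mul_inv_succ _ hdu n, pow_mul_inv_self _ hdu n,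
          Matrix.one_mulVec,
          show cv β ⬝ᵥ (cv ey - cv ex) = ((β ⬝ᵥ (ey - ex) : ℤ) : ℝ) from by
            rw [← cv_sub, cv_dot]]
        ring
      rw [hdot, ee_add_int, ee_add]
    rw [Finset.sum_congr rfl fun b hb => Finset.sum_congr rfl fun β hβ => hterm b hb β hβ]
    rw [← Finset.sum_mul_sum]
    by_cases hxy : x = y
    · rw [if_pos hxy]
      have heq : lx = ly ∧ ex = ey := by
        apply decomp_inj hIHt hdetnT hlx hly
        rw [Matrix.transpose_pow]
        rw [hxe, hye] at hxy
        exact hxy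
      obtain ⟨h1, h2⟩ := heq
      subst h1; subst h2
      have hz : ∀ u : Fin d → ℝ, u ⬝ᵥ (cv lx - cv lx) = 0 := by
        intro u; rw [sub_self, dotProduct_zero]
      have hz2 : ∀ u : Fin d → ℝ, u ⬝ᵥ (cv ex - cv ex) = 0 := by
        intro u; rw [sub_self, dotProduct_zero]
      simp only [hz, hz2, add_zero, ee_zero]
      rw [Finset.sum_const, Finset.sum_const, hcB (n+1), hcB n]
      simp only [nsmul_eq_mul, mul_one]
      push_cast
      ring
    · rw [if_neg hxy]
      by_cases hll : lx = ly
      · subst hll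
        have hee : ex ≠ ey := fun h => hxy (by rw [hxe, hye, h])
        have hF : ∑ b ∈ B, ee ((matR (R^(n+1)))⁻¹ *ᵥ cv b ⬝ᵥ (cv lx - cv lx)
              + (matR R)⁻¹ *ᵥ cv b ⬝ᵥ (cv ey - cv ex)) = 0 := by
          have : ∀ b ∈ B, ee ((matR (R^(n+1)))⁻¹ *ᵥ cv b ⬝ᵥ (cv lx - cv lx)
              + (matR R)⁻¹ *ᵥ cv b ⬝ᵥ (cv ey - cv ex))
                = ee ((matR R)⁻¹ *ᵥ cv b ⬝ᵥ (cv ey - cv ex)) := by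
            intro b hb
            rw [sub_self, dotProduct_zero, zero_add]
          rw [Finset.sum_congr rfl this, sum_entry hH hex hey, if_neg hee]
        rw [hF, zero_mul]
      · have hG : ∑ β ∈ iterSum R B n, ee ((matR (R^n))⁻¹ *ᵥ cv β ⬝ᵥ (cv ly - cv lx)) = 0 := by
          rw [sum_entry IH hlx hly, if_neg hll]
        rw [hG, mul_zero]

end HadAux
end HadamardAux6

/-- If `(R,B,L)` is a Hadamard triple, then so is `(Rⁿ, 𝐁_n, 𝐋_n)` for
every `n ≥ 1`, where `𝐁_n = B + RB + ⋯ + R^{n-1}B` and `𝐋_n = L + RᵗL + ⋯ + (Rᵗ)^{n-1}L`. -/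
theorem hadamard_triple_iterate
    {d : ℕ} (R : Matrix (Fin d) (Fin d) ℤ) (B L : Finset (Fin d → ℤ))
    (hR : IsExpansive R) (hH : IsHadamardTriple R B L) :
    ∀ n : ℕ, 1 ≤ n → IsHadamardTriple (R ^ n) (iterSum R B n) (iterSum R.transpose L n) := by
  intro n _
  exact HadAux.main_triple hH (HadAux.det_ne_zero_of_expansive hR) n
end

section
/- Suppose (R, B, L) forms a Hadamard triple on ℝ^d, let n ≥ 1, and set 𝐁_n = B + RB + ⋯ + R^{n-1}B and 𝐋_n = L + RᵗL + ⋯ + (Rᵗ)^{n-1}L. If 𝐋̃_n ⊂ ℤ^d is obtained from 𝐋_n by replacing each element l ∈ 𝐋_n with l + (Rᵗ)ⁿ m_l for some m_l ∈ ℤ^d (i.e. 𝐋̃_n ≡ 𝐋_n (mod (Rᵗ)ⁿℤ^d)), then (Rⁿ, 𝐁_n, 𝐋̃_n) is also a Hadamard triple. -/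
open MeasureTheory Filter Set
open scoped ENNReal RealInnerProductSpace ComplexConjugate Pointwise Topology

section HTauxSec
open Matrix Finset
open scoped Pointwise

namespace HTaux
variable {d : ℕ}

noncomputable def eC (t : ℝ) : ℂ := Complex.exp (((-(2 * Real.pi * t) : ℝ) : ℂ) * Complex.I)

lemma eC_add (s t : ℝ) : eC (s + t) = eC s * eC t := by
  rw [eC, eC, eC, ← Complex.exp_add]; congr 1; push_cast; ring

lemma eC_int (k : ℤ) : eC (k : ℝ) = 1 := by
  have h := Complex.exp_int_mul_two_pi_mul_I (-k)
  rw [eC, ← h]; congr 1; push_cast; ring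

lemma eC_zero : eC 0 = 1 := by simpa using eC_int 0

lemma conj_eC (t : ℝ) : (starRingEnd ℂ) (eC t) = eC (-t) := by
  rw [eC, eC, ← Complex.exp_conj]; congr 1
  simp only [_root_.map_mul, Complex.conj_ofReal, Complex.conj_I]
  push_cast; ring

lemma star_eC (t : ℝ) : star (eC t) = eC (-t) := conj_eC t

def vR (v : Fin d → ℤ) : Fin d → ℝ := fun i => (v i : ℝ)

lemma vR_add (a b : Fin d → ℤ) : vR (a + b) = vR a + vR b := by
  funext i; simp [vR]

lemma vR_sub (a b : Fin d → ℤ) : vR (a - b) = vR a - vR b := by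
  funext i; simp [vR]

lemma vR_zero : vR (0 : Fin d → ℤ) = 0 := by funext i; simp [vR]

lemma vR_mulVec (M : Matrix (Fin d) (Fin d) ℤ) (v : Fin d → ℤ) :
    vR (M *ᵥ v) = (matR M) *ᵥ vR v := by
  funext i
  simp [vR, Matrix.mulVec, dotProduct, matR, Matrix.map_apply]

lemma dot_vR (a b : Fin d → ℤ) : (vR a) ⬝ᵥ (vR b) = ((a ⬝ᵥ b : ℤ) : ℝ) := by
  simp [dotProduct, vR]

lemma matR_pow (M : Matrix (Fin d) (Fin d) ℤ) (n : ℕ) : matR (M ^ n) = matR M ^ n := by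
  show (Int.castRingHom ℝ).mapMatrix (M ^ n) = ((Int.castRingHom ℝ).mapMatrix M) ^ n
  exact map_pow _ _ _

lemma matR_transpose (M : Matrix (Fin d) (Fin d) ℤ) : matR Mᵀ = (matR M)ᵀ := rfl

lemma dot_tmul (M : Matrix (Fin d) (Fin d) ℝ) (u w : Fin d → ℝ) :
    u ⬝ᵥ (Mᵀ *ᵥ w) = (M *ᵥ u) ⬝ᵥ w := by
  rw [Matrix.dotProduct_mulVec, Matrix.vecMul_transpose]

lemma inv_pow_mat (M : Matrix (Fin d) (Fin d) ℝ) : ∀ n : ℕ, (M ^ n)⁻¹ = (M⁻¹) ^ n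
  | 0 => by simp
  | n+1 => by rw [pow_succ, Matrix.mul_inv_rev, inv_pow_mat M n, pow_succ']

lemma isUnit_det_matR {R : Matrix (Fin d) (Fin d) ℤ} (hR : IsExpansive R) :
    IsUnit (matR R).det := by
  have hdet : R.det ≠ 0 := by
    intro h0
    have hc : (R.map (Int.cast : ℤ → ℂ)).det = 0 := by
      have h1 : (R.map (Int.cast : ℤ → ℂ)) = (Int.castRingHom ℂ).mapMatrix R := rfl
      rw [h1, ← RingHom.map_det, h0]
      simp
    have h2 : (R.map (Int.cast : ℤ → ℂ)).charpoly.coeff 0 = 0 := by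
      have hs := Matrix.det_eq_sign_charpoly_coeff (R.map (Int.cast : ℤ → ℂ))
      rw [hc] at hs
      rcases mul_eq_zero.mp hs.symm with h | h
      · exact absurd h (pow_ne_zero _ (by norm_num))
      · exact h
    have hroot : (R.map (Int.cast : ℤ → ℂ)).charpoly.IsRoot 0 := by
      rwa [Polynomial.IsRoot, ← Polynomial.coeff_zero_eq_eval_zero]
    have hlt := hR 0 hroot
    norm_num at hlt
  have hcast : (matR R).det = ((R.det : ℤ) : ℝ) := by
    have h1 : matR R = (Int.castRingHom ℝ).mapMatrix R := rfl
    rw [h1, ← RingHom.map_det]; rfl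
  rw [hcast]
  simpa using hdet

lemma mulVec_int_injective {M : Matrix (Fin d) (Fin d) ℤ} (h : IsUnit (matR M).det) :
    Function.Injective (M.mulVec) := by
  intro x y hxy
  have h1 : matR M *ᵥ vR x = matR M *ᵥ vR y := by
    rw [← vR_mulVec, ← vR_mulVec, hxy]
  have h2 : vR x = vR y := by
    have h3 := congrArg (fun w => (matR M)⁻¹ *ᵥ w) h1
    simpa [Matrix.mulVec_mulVec, Matrix.nonsing_inv_mul _ h] using h3
  funext i
  have h4 : ((x i : ℝ)) = ((y i : ℝ)) := congrFun h2 i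
  exact_mod_cast h4

lemma image_mulVec_add (M : Matrix (Fin d) (Fin d) ℤ) (s t : Finset (Fin d → ℤ)) :
    (s + t).image (M.mulVec) = s.image M.mulVec + t.image M.mulVec := by
  ext x
  simp only [Finset.mem_image, Finset.mem_add]
  constructor
  · rintro ⟨v, hv, rfl⟩
    obtain ⟨a, ha, b, hb, rfl⟩ := hv
    exact ⟨M *ᵥ a, ⟨a, ha, rfl⟩, M *ᵥ b, ⟨b, hb, rfl⟩, (Matrix.mulVec_add M a b).symm⟩
  · rintro ⟨u, ⟨a, ha, rfl⟩, w, ⟨b, hb, rfl⟩, rfl⟩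
    exact ⟨a + b, ⟨a, ha, b, hb, rfl⟩, Matrix.mulVec_add M a b⟩

lemma iterSum_succ' (S : Matrix (Fin d) (Fin d) ℤ) (L : Finset (Fin d → ℤ)) (n : ℕ) :
    iterSum S L (n + 1) = iterSum S L n + L.image ((S ^ n).mulVec) := by
  induction n with
  | zero =>
    show L + Finset.image _ {0} = {0} + L.image ((S ^ 0).mulVec)
    ext x
    simp [Finset.mem_add, Matrix.mulVec_zero, Matrix.one_mulVec]
  | succ k ih =>
    show L + (iterSum S L (k+1)).image S.mulVec = _
    rw [ih, image_mulVec_add, Finset.image_image]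
    have h1 : (S.mulVec ∘ (S ^ k).mulVec) = (S ^ (k+1)).mulVec := by
      funext v
      simp [Function.comp, Matrix.mulVec_mulVec, pow_succ']
    rw [h1, ← add_assoc, ← ih]
    rfl

lemma iterSum_succ_eq_image (R : Matrix (Fin d) (Fin d) ℤ) (B : Finset (Fin d → ℤ)) (n : ℕ) :
    iterSum R B (n + 1)
      = (B ×ˢ iterSum R B n).image (fun p => p.1 + R *ᵥ p.2) := by
  ext x
  show x ∈ B + (iterSum R B n).image R.mulVec ↔ _
  simp only [Finset.mem_add, Finset.mem_image, Finset.mem_product]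
  constructor
  · rintro ⟨a, ha, z, ⟨c, hc, rfl⟩, rfl⟩
    exact ⟨(a, c), ⟨ha, hc⟩, rfl⟩
  · rintro ⟨⟨a, c⟩, ⟨ha, hc⟩, rfl⟩
    exact ⟨a, ha, R *ᵥ c, ⟨c, hc, rfl⟩, rfl⟩

lemma iterSum_succ'_eq_image (S : Matrix (Fin d) (Fin d) ℤ) (L : Finset (Fin d → ℤ)) (n : ℕ) :
    iterSum S L (n + 1)
      = ((iterSum S L n) ×ˢ L).image (fun p => p.1 + (S ^ n) *ᵥ p.2) := by
  rw [iterSum_succ']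
  ext x
  simp only [Finset.mem_add, Finset.mem_image, Finset.mem_product]
  constructor
  · rintro ⟨a, ha, z, ⟨c, hc, rfl⟩, rfl⟩
    exact ⟨(a, c), ⟨ha, hc⟩, rfl⟩
  · rintro ⟨⟨a, c⟩, ⟨ha, hc⟩, rfl⟩
    exact ⟨a, ha, (S ^ n) *ᵥ c, ⟨c, hc, rfl⟩, rfl⟩

lemma iterSum_empty (S : Matrix (Fin d) (Fin d) ℤ) (n : ℕ) :
    iterSum S (∅ : Finset (Fin d → ℤ)) (n + 1) = ∅ := by
  show (∅ : Finset (Fin d → ℤ)) + _ = ∅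
  exact Finset.empty_add _

end HTaux
end HTauxSec
section HTaux2
open Matrix Finset
open scoped Pointwise

namespace HTaux
variable {d : ℕ} {R : Matrix (Fin d) (Fin d) ℤ} {B L : Finset (Fin d → ℤ)}

lemma hadamard_apply (R : Matrix (Fin d) (Fin d) ℤ) (B L : Finset (Fin d → ℤ))
    (b : {b // b ∈ B}) (l : {l // l ∈ L}) :
    hadamardMatrix R B L b l
      = ((1 / Real.sqrt (B.card) : ℝ) : ℂ) *
        eC (((matR R)⁻¹ *ᵥ vR (b : Fin d → ℤ)) ⬝ᵥ vR (l : Fin d → ℤ)) := rfl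

lemma conj_mul_eC (c t t' : ℝ) :
    star (((c : ℝ) : ℂ) * eC t) * (((c : ℝ) : ℂ) * eC t')
      = (((c * c : ℝ)) : ℂ) * eC (t' - t) := by
  rw [star_mul', show star ((c : ℂ)) = (c : ℂ) from Complex.conj_ofReal c, star_eC,
    mul_mul_mul_comm, ← Complex.ofReal_mul, ← eC_add, neg_add_eq_sub]

lemma norm_cast_helper {q : ℕ} (hq : q ≠ 0) :
    (((1 / Real.sqrt q * (1 / Real.sqrt q) : ℝ)) : ℂ) = (q : ℂ)⁻¹ := by
  have h1 : Real.sqrt q * Real.sqrt q = (q : ℝ) :=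
    Real.mul_self_sqrt (Nat.cast_nonneg q)
  have h2 : (1 / Real.sqrt q * (1 / Real.sqrt q) : ℝ) = (q : ℝ)⁻¹ := by
    rw [div_mul_div_comm, one_mul, h1, one_div]
  rw [h2]
  push_cast
  ring

lemma col_orth (hH : IsHadamardTriple R B L) :
    ∀ l ∈ L, ∀ l' ∈ L,
      ∑ b ∈ B, eC (((matR R)⁻¹ *ᵥ vR b) ⬝ᵥ vR (l' - l))
        = if l = l' then (B.card : ℂ) else 0 := by
  intro l hl l' hl'
  have hq : B.card ≠ 0 := by
    rw [hH.1]; exact Finset.card_ne_zero_of_mem hl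
  have hQ : ((B.card : ℂ)) ≠ 0 := Nat.cast_ne_zero.mpr hq
  have h2 := Matrix.ext_iff.mpr hH.2 ⟨l, hl⟩ ⟨l', hl'⟩
  rw [Matrix.mul_apply] at h2
  have hterm : ∀ b : {b // b ∈ B},
      (hadamardMatrix R B L)ᴴ ⟨l, hl⟩ b * hadamardMatrix R B L b ⟨l', hl'⟩
        = (((1 / Real.sqrt B.card * (1 / Real.sqrt B.card) : ℝ)) : ℂ)
            * eC (((matR R)⁻¹ *ᵥ vR (b : Fin d → ℤ)) ⬝ᵥ vR (l' - l)) := by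
    intro b
    rw [Matrix.conjTranspose_apply, hadamard_apply, hadamard_apply, conj_mul_eC]
    congr 1
    rw [vR_sub, dotProduct_sub]
  rw [Finset.sum_congr rfl (fun b _ => hterm b), ← Finset.mul_sum,
    Finset.sum_coe_sort B (fun b => eC (((matR R)⁻¹ *ᵥ vR b) ⬝ᵥ vR (l' - l))),
    norm_cast_helper hq, Matrix.one_apply] at h2
  simp only [Subtype.mk_eq_mk] at h2
  calc ∑ b ∈ B, eC (((matR R)⁻¹ *ᵥ vR b) ⬝ᵥ vR (l' - l))
      = (B.card : ℂ) * ((B.card : ℂ)⁻¹ *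
          ∑ b ∈ B, eC (((matR R)⁻¹ *ᵥ vR b) ⬝ᵥ vR (l' - l))) := by
        field_simp
    _ = (B.card : ℂ) * (if l = l' then 1 else 0) := by rw [h2]
    _ = if l = l' then (B.card : ℂ) else 0 := by split <;> simp

lemma row_orth (hH : IsHadamardTriple R B L) :
    ∀ b ∈ B, ∀ b' ∈ B,
      ∑ l ∈ L, eC (((matR R)⁻¹ *ᵥ (vR b - vR b')) ⬝ᵥ vR l)
        = if b = b' then (B.card : ℂ) else 0 := by
  intro b hb b' hb'
  have hq : B.card ≠ 0 := Finset.card_ne_zero_of_mem hb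
  have hQ : ((B.card : ℂ)) ≠ 0 := Nat.cast_ne_zero.mpr hq
  have e : {l // l ∈ L} ≃ {b // b ∈ B} :=
    Fintype.equivOfCardEq (by simp [Fintype.card_coe, hH.1])
  have hU : hadamardMatrix R B L * (hadamardMatrix R B L)ᴴ = 1 :=
    (Matrix.mul_eq_one_comm_of_equiv e).mp hH.2
  have h2 := Matrix.ext_iff.mpr hU ⟨b, hb⟩ ⟨b', hb'⟩
  rw [Matrix.mul_apply] at h2
  have hterm : ∀ l : {l // l ∈ L},
      hadamardMatrix R B L ⟨b, hb⟩ l * (hadamardMatrix R B L)ᴴ l ⟨b', hb'⟩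
        = (((1 / Real.sqrt B.card * (1 / Real.sqrt B.card) : ℝ)) : ℂ)
            * eC (((matR R)⁻¹ *ᵥ (vR b - vR b')) ⬝ᵥ vR (l : Fin d → ℤ)) := by
    intro l
    rw [Matrix.conjTranspose_apply, mul_comm, hadamard_apply, hadamard_apply, conj_mul_eC]
    congr 1
    rw [Matrix.mulVec_sub, sub_dotProduct]
  rw [Finset.sum_congr rfl (fun l _ => hterm l), ← Finset.mul_sum,
    Finset.sum_coe_sort L (fun l => eC (((matR R)⁻¹ *ᵥ (vR b - vR b')) ⬝ᵥ vR l)),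
    norm_cast_helper hq, Matrix.one_apply] at h2
  simp only [Subtype.mk_eq_mk] at h2
  calc ∑ l ∈ L, eC (((matR R)⁻¹ *ᵥ (vR b - vR b')) ⬝ᵥ vR l)
      = (B.card : ℂ) * ((B.card : ℂ)⁻¹ *
          ∑ l ∈ L, eC (((matR R)⁻¹ *ᵥ (vR b - vR b')) ⬝ᵥ vR l)) := by
        field_simp
    _ = (B.card : ℂ) * (if b = b' then 1 else 0) := by rw [h2]
    _ = if b = b' then (B.card : ℂ) else 0 := by split <;> simp

end HTaux
end HTaux2
section HTaux3
open Matrix Finset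
open scoped Pointwise

namespace HTaux
variable {d : ℕ} {R : Matrix (Fin d) (Fin d) ℤ} {B L : Finset (Fin d → ℤ)}

lemma B_mod (hR : IsExpansive R) (hH : IsHadamardTriple R B L) :
    ∀ b ∈ B, ∀ b' ∈ B, ∀ k : Fin d → ℤ, b = b' + R *ᵥ k → b = b' := by
  intro b hb b' hb' k hk
  by_contra hne
  have hdet := isUnit_det_matR hR
  have h2 : (matR R)⁻¹ *ᵥ (vR b - vR b') = vR k := by
    have h1 : vR b - vR b' = matR R *ᵥ vR k := by
      rw [← vR_sub, hk, add_sub_cancel_left, vR_mulVec]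
    rw [h1, Matrix.mulVec_mulVec, Matrix.nonsing_inv_mul _ hdet, Matrix.one_mulVec]
  have h3 := row_orth hH b hb b' hb'
  rw [if_neg hne] at h3
  have h4 : ∀ l ∈ L, eC (((matR R)⁻¹ *ᵥ (vR b - vR b')) ⬝ᵥ vR l) = 1 := by
    intro l _
    rw [h2, dot_vR, eC_int]
  rw [Finset.sum_congr rfl h4, Finset.sum_const, nsmul_eq_mul, mul_one] at h3
  have h5 : L.card = 0 := by exact_mod_cast h3
  exact (Finset.card_ne_zero_of_mem hb) (hH.1.trans h5)

lemma L_mod (hR : IsExpansive R) (hH : IsHadamardTriple R B L) :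
    ∀ l ∈ L, ∀ l' ∈ L, ∀ k : Fin d → ℤ, l' = l + Rᵀ *ᵥ k → l = l' := by
  intro l hl l' hl' k hk
  by_contra hne
  have hdet := isUnit_det_matR hR
  have h4 : ∀ b ∈ B, eC (((matR R)⁻¹ *ᵥ vR b) ⬝ᵥ vR (l' - l)) = 1 := by
    intro b _
    have h1 : vR (l' - l) = (matR R)ᵀ *ᵥ vR k := by
      rw [hk, add_sub_cancel_left, vR_mulVec, matR_transpose]
    rw [h1, dot_tmul, Matrix.mulVec_mulVec, Matrix.mul_nonsing_inv _ hdet,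
      Matrix.one_mulVec, dot_vR, eC_int]
  have h3 := col_orth hH l hl l' hl'
  rw [if_neg hne, Finset.sum_congr rfl h4, Finset.sum_const, nsmul_eq_mul, mul_one] at h3
  have h5 : B.card = 0 := by exact_mod_cast h3
  exact (Finset.card_ne_zero_of_mem hl) (hH.1.symm.trans h5)

lemma pair_inj_B (hR : IsExpansive R) (hH : IsHadamardTriple R B L) (n : ℕ) :
    ∀ p ∈ B ×ˢ iterSum R B n, ∀ p' ∈ B ×ˢ iterSum R B n,
      p.1 + R *ᵥ p.2 = p'.1 + R *ᵥ p'.2 → p = p' := by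
  intro p hp p' hp' h
  rw [Finset.mem_product] at hp hp'
  have h1 : p.1 = p'.1 + R *ᵥ (p'.2 - p.2) := by
    rw [Matrix.mulVec_sub]; linear_combination h
  have h2 : p.1 = p'.1 := B_mod hR hH p.1 hp.1 p'.1 hp'.1 _ h1
  have h3 : p.2 = p'.2 := by
    apply mulVec_int_injective (isUnit_det_matR hR)
    have h4 := h
    rw [h2] at h4
    exact add_left_cancel h4
  exact Prod.ext h2 h3

lemma pair_inj_L (hR : IsExpansive R) (hH : IsHadamardTriple R B L) (n : ℕ) :
    ∀ p ∈ L ×ˢ iterSum Rᵀ L n, ∀ p' ∈ L ×ˢ iterSum Rᵀ L n,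
      p.1 + Rᵀ *ᵥ p.2 = p'.1 + Rᵀ *ᵥ p'.2 → p = p' := by
  intro p hp p' hp' h
  rw [Finset.mem_product] at hp hp'
  have h1 : p'.1 = p.1 + Rᵀ *ᵥ (p.2 - p'.2) := by
    rw [Matrix.mulVec_sub]; linear_combination h.symm
  have h2 : p.1 = p'.1 := L_mod hR hH p.1 hp.1 p'.1 hp'.1 _ h1
  have hdetT : IsUnit (matR Rᵀ).det := by
    rw [matR_transpose, Matrix.det_transpose]; exact isUnit_det_matR hR
  have h3 : p.2 = p'.2 := by
    apply mulVec_int_injective hdetT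
    have h4 := h
    rw [h2] at h4
    exact add_left_cancel h4
  exact Prod.ext h2 h3

lemma card_iterSum_B (hR : IsExpansive R) (hH : IsHadamardTriple R B L) :
    ∀ n : ℕ, (iterSum R B n).card = B.card ^ n
  | 0 => by simp [iterSum]
  | n+1 => by
    rw [iterSum_succ_eq_image,
      Finset.card_image_of_injOn
        (fun p hp p' hp' h => pair_inj_B hR hH n p (Finset.mem_coe.mp hp)
          p' (Finset.mem_coe.mp hp') h),
      Finset.card_product, card_iterSum_B hR hH n, pow_succ']

lemma card_iterSum_L (hR : IsExpansive R) (hH : IsHadamardTriple R B L) :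
    ∀ n : ℕ, (iterSum Rᵀ L n).card = B.card ^ n
  | 0 => by simp [iterSum]
  | n+1 => by
    rw [iterSum_succ_eq_image,
      Finset.card_image_of_injOn
        (fun p hp p' hp' h => pair_inj_L hR hH n p (Finset.mem_coe.mp hp)
          p' (Finset.mem_coe.mp hp') h),
      Finset.card_product, card_iterSum_L hR hH n, pow_succ', hH.1]

lemma matR_pow_transpose (R : Matrix (Fin d) (Fin d) ℤ) (k : ℕ) :
    matR (Rᵀ ^ k) = ((matR R) ^ k)ᵀ := by
  rw [matR_pow, matR_transpose, Matrix.transpose_pow]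

lemma pow_mul_invpow (hR : IsExpansive R) (k : ℕ) :
    (matR R) ^ k * ((matR R)⁻¹) ^ k = 1 := by
  have hdet := isUnit_det_matR hR
  have hc : Commute (matR R) (matR R)⁻¹ := by
    unfold Commute SemiconjBy
    rw [Matrix.mul_nonsing_inv _ hdet, Matrix.nonsing_inv_mul _ hdet]
  rw [← hc.mul_pow, Matrix.mul_nonsing_inv _ hdet, one_pow]

lemma helper1 (hR : IsExpansive R) (k : ℕ) (x y : Fin d → ℤ) :
    ((((matR R)⁻¹) ^ k) *ᵥ vR x) ⬝ᵥ vR ((Rᵀ ^ k) *ᵥ y) = ((x ⬝ᵥ y : ℤ) : ℝ) := by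
  rw [vR_mulVec, matR_pow_transpose, dot_tmul, Matrix.mulVec_mulVec,
    pow_mul_invpow hR k, Matrix.one_mulVec, dot_vR]

lemma helper1_one (hR : IsExpansive R) (x y : Fin d → ℤ) :
    ((matR R)⁻¹ *ᵥ vR x) ⬝ᵥ vR (Rᵀ *ᵥ y) = ((x ⬝ᵥ y : ℤ) : ℝ) := by
  have h := helper1 hR 1 x y
  rwa [pow_one, pow_one] at h

lemma helper2 (hR : IsExpansive R) (k : ℕ) (x y : Fin d → ℤ) :
    ((((matR R)⁻¹) ^ (k+1)) *ᵥ vR x) ⬝ᵥ vR ((Rᵀ ^ k) *ᵥ y)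
      = ((matR R)⁻¹ *ᵥ vR x) ⬝ᵥ vR y := by
  have hmul : (matR R) ^ k * ((matR R)⁻¹) ^ (k+1) = (matR R)⁻¹ := by
    rw [pow_succ, ← mul_assoc, pow_mul_invpow hR k, one_mul]
  rw [vR_mulVec, matR_pow_transpose, dot_tmul, Matrix.mulVec_mulVec, hmul]

lemma helper3 (hR : IsExpansive R) (k : ℕ) (u : Fin d → ℝ) :
    (((matR R)⁻¹) ^ (k+1)) *ᵥ (matR R *ᵥ u) = (((matR R)⁻¹) ^ k) *ᵥ u := by
  have hdet := isUnit_det_matR hR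
  rw [Matrix.mulVec_mulVec, pow_succ, mul_assoc, Matrix.nonsing_inv_mul _ hdet, mul_one]

lemma key (hR : IsExpansive R) (hH : IsHadamardTriple R B L) :
    ∀ n : ℕ, ∀ l ∈ iterSum Rᵀ L n, ∀ l' ∈ iterSum Rᵀ L n, ∀ m : Fin d → ℤ,
      ∑ b ∈ iterSum R B n,
          eC (((((matR R)⁻¹) ^ n) *ᵥ vR b) ⬝ᵥ vR (l' - l + (Rᵀ ^ n) *ᵥ m))
        = if l = l' then ((B.card : ℂ)) ^ n else 0 := by
  intro n
  induction n with
  | zero =>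
    intro l hl l' hl' m
    have hl0 : l = 0 := by simpa [iterSum] using hl
    have hl'0 : l' = 0 := by simpa [iterSum] using hl'
    subst hl0; subst hl'0
    have h1 : iterSum R B 0 = {0} := rfl
    rw [h1, Finset.sum_singleton, if_pos rfl, pow_zero, pow_zero, vR_zero,
      Matrix.mulVec_zero, zero_dotProduct, eC_zero]
    norm_num
  | succ n ih =>
    intro l hl l' hl' m
    by_cases hE : l = l'
    · rw [if_pos hE]
      subst hE
      have hterm : ∀ b ∈ iterSum R B (n+1),
          eC (((((matR R)⁻¹) ^ (n+1)) *ᵥ vR b) ⬝ᵥ vR (l - l + (Rᵀ ^ (n+1)) *ᵥ m)) = 1 := by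
        intro b _
        rw [sub_self, zero_add, helper1 hR (n+1), eC_int]
      rw [Finset.sum_congr rfl hterm, Finset.sum_const, nsmul_eq_mul, mul_one,
        card_iterSum_B hR hH (n+1)]
      push_cast
      ring
    · rw [if_neg hE]
      rw [iterSum_succ'_eq_image] at hl hl'
      obtain ⟨⟨lam, l0⟩, hmem, rfl⟩ := Finset.mem_image.1 hl
      obtain ⟨⟨lam', l0'⟩, hmem', rfl⟩ := Finset.mem_image.1 hl'
      rw [Finset.mem_product] at hmem hmem'
      obtain ⟨hlam, hl0⟩ := hmem
      obtain ⟨hlam', hl0'⟩ := hmem'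
      rw [iterSum_succ_eq_image, Finset.sum_image (pair_inj_B hR hH n), Finset.sum_product]
      have hw : (lam' + (Rᵀ ^ n) *ᵥ l0') - (lam + (Rᵀ ^ n) *ᵥ l0) + (Rᵀ ^ (n+1)) *ᵥ m
          = (lam' - lam) + (Rᵀ ^ n) *ᵥ (l0' - l0 + Rᵀ *ᵥ m) := by
        rw [Matrix.mulVec_add, Matrix.mulVec_sub, Matrix.mulVec_mulVec, ← pow_succ]
        abel
      have hterm : ∀ b0 c : Fin d → ℤ,
          eC (((((matR R)⁻¹) ^ (n+1)) *ᵥ vR (b0 + R *ᵥ c))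
              ⬝ᵥ vR ((lam' + (Rᵀ ^ n) *ᵥ l0') - (lam + (Rᵀ ^ n) *ᵥ l0) + (Rᵀ ^ (n+1)) *ᵥ m))
            = eC (((((matR R)⁻¹) ^ (n+1)) *ᵥ vR b0)
                ⬝ᵥ vR ((lam' - lam) + (Rᵀ ^ n) *ᵥ (l0' - l0 + Rᵀ *ᵥ m)))
              * eC (((((matR R)⁻¹) ^ n) *ᵥ vR c) ⬝ᵥ vR (lam' - lam)) := by
        intro b0 c
        rw [hw, vR_add b0, vR_mulVec, Matrix.mulVec_add, helper3 hR n (vR c),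
          add_dotProduct, vR_add (lam' - lam), dotProduct_add,
          dotProduct_add, helper1 hR n c (l0' - l0 + Rᵀ *ᵥ m)]
        simp only [eC_add, eC_int, mul_one]
      have hihz : lam' - lam + (Rᵀ ^ n) *ᵥ (0 : Fin d → ℤ) = lam' - lam := by
        rw [Matrix.mulVec_zero, add_zero]
      have hin : ∑ c ∈ iterSum R B n,
          eC (((((matR R)⁻¹) ^ n) *ᵥ vR c) ⬝ᵥ vR (lam' - lam))
            = if lam = lam' then ((B.card : ℂ)) ^ n else 0 := by
        have h := ih lam hlam lam' hlam' 0
        rwa [hihz] at h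
      have step1 : ∀ b0 ∈ B,
          (∑ c ∈ iterSum R B n,
            eC (((((matR R)⁻¹) ^ (n+1)) *ᵥ vR (b0 + R *ᵥ c))
              ⬝ᵥ vR ((lam' + (Rᵀ ^ n) *ᵥ l0') - (lam + (Rᵀ ^ n) *ᵥ l0) + (Rᵀ ^ (n+1)) *ᵥ m)))
            = eC (((((matR R)⁻¹) ^ (n+1)) *ᵥ vR b0)
                ⬝ᵥ vR ((lam' - lam) + (Rᵀ ^ n) *ᵥ (l0' - l0 + Rᵀ *ᵥ m)))
              * (if lam = lam' then ((B.card : ℂ)) ^ n else 0) := by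
        intro b0 _
        rw [Finset.sum_congr rfl (fun c _ => hterm b0 c), ← Finset.mul_sum, hin]
      rw [Finset.sum_congr rfl step1]
      by_cases hll : lam = lam'
      · subst hll
        have hne : l0 ≠ l0' := by
          intro h; exact hE (by rw [h])
        have hz : lam - lam + (Rᵀ ^ n) *ᵥ (l0' - l0 + Rᵀ *ᵥ m)
            = (Rᵀ ^ n) *ᵥ (l0' - l0 + Rᵀ *ᵥ m) := by
          rw [sub_self, zero_add]
        have step2 : ∀ b0 ∈ B,
            eC (((((matR R)⁻¹) ^ (n+1)) *ᵥ vR b0)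
                ⬝ᵥ vR ((lam - lam) + (Rᵀ ^ n) *ᵥ (l0' - l0 + Rᵀ *ᵥ m)))
              * (if lam = lam then ((B.card : ℂ)) ^ n else 0)
            = eC (((matR R)⁻¹ *ᵥ vR b0) ⬝ᵥ vR (l0' - l0)) * ((B.card : ℂ)) ^ n := by
          intro b0 _
          rw [if_pos rfl, hz, helper2 hR n, vR_add (l0' - l0), dotProduct_add,
            helper1_one hR b0 m, eC_add, eC_int, mul_one]
        rw [Finset.sum_congr rfl step2, ← Finset.sum_mul, col_orth hH l0 hl0 l0' hl0',
          if_neg hne, zero_mul]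
      · have hzero : (if lam = lam' then ((B.card : ℂ)) ^ n else 0) = 0 := if_neg hll
        simp only [hzero, mul_zero, Finset.sum_const_zero]

lemma iter_L_mod (hR : IsExpansive R) (hH : IsHadamardTriple R B L) (n : ℕ) :
    ∀ l ∈ iterSum Rᵀ L n, ∀ l' ∈ iterSum Rᵀ L n, ∀ k : Fin d → ℤ,
      l' = l + (Rᵀ ^ n) *ᵥ k → l = l' := by
  intro l hl l' hl' k hk
  by_contra hne
  cases n with
  | zero =>
    have h1 : l = 0 := by simpa [iterSum] using hl
    have h2 : l' = 0 := by simpa [iterSum] using hl'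
    exact hne (h1.trans h2.symm)
  | succ n =>
    have h := key hR hH (n+1) l hl l' hl' (-k)
    rw [if_neg hne] at h
    have hzero : l' - l + (Rᵀ ^ (n+1)) *ᵥ (-k) = 0 := by
      rw [hk, Matrix.mulVec_neg]
      abel
    rw [hzero] at h
    have hone : ∀ b ∈ iterSum R B (n+1),
        eC (((((matR R)⁻¹) ^ (n+1)) *ᵥ vR b) ⬝ᵥ vR (0 : Fin d → ℤ)) = 1 := by
      intro b _
      rw [vR_zero, dotProduct_zero, eC_zero]
    rw [Finset.sum_congr rfl hone, Finset.sum_const, nsmul_eq_mul, mul_one,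
      card_iterSum_B hR hH (n+1)] at h
    have hq0 : B.card ^ (n+1) = 0 := by exact_mod_cast h
    have hq : B.card = 0 := by
      exact (pow_eq_zero_iff (Nat.succ_ne_zero n)).mp hq0
    have hLe : L = ∅ := Finset.card_eq_zero.mp (hH.1.symm.trans hq)
    rw [hLe, iterSum_empty] at hl
    exact absurd hl (Finset.notMem_empty _)

end HTaux
end HTaux3
section HTaux4
open Matrix Finset
open scoped Pointwise

theorem HTaux.main {d : ℕ} (R : Matrix (Fin d) (Fin d) ℤ) (B L : Finset (Fin d → ℤ))
    (hR : IsExpansive R) (hH : IsHadamardTriple R B L) (n : ℕ) (hn : 1 ≤ n)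
    (L' : Finset (Fin d → ℤ))
    (hL' : ∃ m : (Fin d → ℤ) → (Fin d → ℤ),
      L' = (iterSum R.transpose L n).image fun l => l + (R.transpose ^ n).mulVec (m l)) :
    IsHadamardTriple (R ^ n) (iterSum R B n) L' := by

  obtain ⟨m, hL'⟩ := hL'
  have hinj : ∀ x ∈ iterSum Rᵀ L n, ∀ y ∈ iterSum Rᵀ L n,
      x + (Rᵀ ^ n) *ᵥ m x = y + (Rᵀ ^ n) *ᵥ m y → x = y := by
    intro x hx y hy h
    apply HTaux.iter_L_mod hR hH n x hx y hy (m x - m y)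
    rw [Matrix.mulVec_sub]
    linear_combination -h
  constructor
  · rw [hL', Finset.card_image_of_injOn
      (fun x hx y hy h => hinj x (Finset.mem_coe.mp hx) y (Finset.mem_coe.mp hy) h),
      HTaux.card_iterSum_B hR hH n, HTaux.card_iterSum_L hR hH n]
  · have hinv : (matR (R ^ n))⁻¹ = ((matR R)⁻¹) ^ n := by
      rw [HTaux.matR_pow, HTaux.inv_pow_mat]
    ext x y
    rw [Matrix.mul_apply]
    have hq : B.card ≠ 0 := by
      intro h0
      have hLe : L = ∅ := Finset.card_eq_zero.mp (hH.1.symm.trans h0)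
      obtain ⟨k, rfl⟩ : ∃ k, n = k + 1 := ⟨n - 1, by omega⟩
      have hx2 : (x : Fin d → ℤ) ∈ (iterSum Rᵀ L (k+1)).image
          (fun l => l + (Rᵀ ^ (k+1)) *ᵥ m l) := by
        rw [← hL']; exact x.2
      obtain ⟨l, hl, _⟩ := Finset.mem_image.1 hx2
      rw [hLe, HTaux.iterSum_empty] at hl
      exact absurd hl (Finset.notMem_empty _)
    have hQ : (iterSum R B n).card = B.card ^ n := HTaux.card_iterSum_B hR hH n
    have hQ0 : (iterSum R B n).card ≠ 0 := by
      rw [hQ]; exact pow_ne_zero n hq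
    have hterm : ∀ b : {v // v ∈ iterSum R B n},
        (hadamardMatrix (R ^ n) (iterSum R B n) L')ᴴ x b
            * hadamardMatrix (R ^ n) (iterSum R B n) L' b y
          = (((1 / Real.sqrt ((iterSum R B n).card) *
                (1 / Real.sqrt ((iterSum R B n).card)) : ℝ)) : ℂ)
              * HTaux.eC ((((matR R)⁻¹ ^ n) *ᵥ HTaux.vR (b : Fin d → ℤ))
                  ⬝ᵥ HTaux.vR ((y : Fin d → ℤ) - (x : Fin d → ℤ))) := by
      intro b
      rw [Matrix.conjTranspose_apply, HTaux.hadamard_apply, HTaux.hadamard_apply,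
        HTaux.conj_mul_eC, hinv]
      congr 1
      rw [HTaux.vR_sub, dotProduct_sub]
    rw [Finset.sum_congr rfl (fun b _ => hterm b), ← Finset.mul_sum,
      Finset.sum_coe_sort (iterSum R B n)
        (fun b => HTaux.eC ((((matR R)⁻¹ ^ n) *ᵥ HTaux.vR b)
          ⬝ᵥ HTaux.vR ((y : Fin d → ℤ) - (x : Fin d → ℤ)))),
      HTaux.norm_cast_helper hQ0]
    have hx2 : (x : Fin d → ℤ) ∈ (iterSum Rᵀ L n).image
        (fun l => l + (Rᵀ ^ n) *ᵥ m l) := by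
      rw [← hL']; exact x.2
    obtain ⟨lx, hlx, hlxe⟩ := Finset.mem_image.1 hx2
    by_cases hxy : x = y
    · subst hxy
      have hsub : (x : Fin d → ℤ) - (x : Fin d → ℤ)
          = lx - lx + (Rᵀ ^ n) *ᵥ (m lx - m lx) := by
        simp
      rw [hsub]
      have hk := HTaux.key hR hH n lx hlx lx hlx (m lx - m lx)
      rw [if_pos rfl] at hk
      rw [hk, Matrix.one_apply_eq]
      have hcast : ((B.card : ℂ)) ^ n = (((iterSum R B n).card : ℕ) : ℂ) := by
        rw [hQ]; push_cast; ring
      rw [hcast, inv_mul_cancel₀ (Nat.cast_ne_zero.mpr hQ0)]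
    · have hy2 : (y : Fin d → ℤ) ∈ (iterSum Rᵀ L n).image
          (fun l => l + (Rᵀ ^ n) *ᵥ m l) := by
        rw [← hL']; exact y.2
      obtain ⟨ly, hly, hlye⟩ := Finset.mem_image.1 hy2
      have hll : lx ≠ ly := by
        intro h
        apply hxy
        apply Subtype.ext
        rw [← hlxe, ← hlye, h]
      have hsub : (y : Fin d → ℤ) - (x : Fin d → ℤ)
          = ly - lx + (Rᵀ ^ n) *ᵥ (m ly - m lx) := by
        rw [← hlxe, ← hlye, Matrix.mulVec_sub]
        abel
      rw [hsub]
      have hk := HTaux.key hR hH n lx hlx ly hly (m ly - m lx)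
      rw [if_neg hll] at hk
      rw [hk, mul_zero, Matrix.one_apply_ne hxy]

end HTaux4
/-- If `(R,B,L)` is a Hadamard triple and `𝐋̃_n ≡ 𝐋_n (mod (Rᵗ)ⁿ ℤ^d)`,
then `(Rⁿ, 𝐁_n, 𝐋̃_n)` is also a Hadamard triple. -/
theorem hadamard_triple_iterate_mod
    {d : ℕ} (R : Matrix (Fin d) (Fin d) ℤ) (B L : Finset (Fin d → ℤ))
    (hR : IsExpansive R) (hH : IsHadamardTriple R B L) (n : ℕ) (hn : 1 ≤ n)
    (L' : Finset (Fin d → ℤ))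
    (hL' : ∃ m : (Fin d → ℤ) → (Fin d → ℤ),
      L' = (iterSum R.transpose L n).image fun l => l + (R.transpose ^ n).mulVec (m l)) :
    IsHadamardTriple (R ^ n) (iterSum R B n) L' :=
  HTaux.main R B L hR hH n hn L' hL'
end

section
/- Let 1 ≤ r < d, let μ be a compactly supported Borel probability measure on ℝ^d = ℝ^r × ℝ^{d-r}, let μ₁ be a compactly supported Borel probability measure on ℝ^r, and let (μ₂^{(s)})_{s∈ℝ^r} be a family of compactly supported Borel probability measures on ℝ^{d-r} such that for each x₂ ∈ ℝ^{d-r} the function s ↦ |μ̂₂^{(s)}(x₂)|² is μ₁-integrable. Assume that for every spectrum Λ₁ of μ₁ and every (x₁, x₂) ∈ ℝ^r × ℝ^{d-r}, one has ∑_{λ₁∈Λ₁} |μ̂(x₁+λ₁, x₂)|² = ∫ |μ̂₂^{(s)}(x₂)|² dμ₁(s). Suppose Γ ⊂ ℝ^{d-r} is a countable set that is a spectrum of μ₂^{(s)} for μ₁-almost every s, and that for each γ ∈ Γ, Λ_γ is a spectrum of μ₁. Then ⋃_{γ∈Γ} (Λ_γ × {γ}) is a spectrum of μ. -/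
open MeasureTheory Filter Set
open scoped ENNReal RealInnerProductSpace ComplexConjugate Pointwise Topology

set_option linter.unusedSectionVars false
set_option maxHeartbeats 1000000

noncomputable section Generic

variable {α : Type*} [NormedAddCommGroup α] [NormedSpace ℝ α] [MeasurableSpace α] [BorelSpace α]
  [SecondCountableTopology α]

/-- generic character -/
def charF (p : α → α → ℝ) (l x : α) : ℂ :=
  Complex.exp (((2 * Real.pi * p l x : ℝ) : ℂ) * Complex.I)

/-- generic Fourier transform of a measure -/
def hatF (p : α → α → ℝ) (μ : Measure α) (ξ : α) : ℂ :=
  ∫ x, Complex.exp (((-(2 * Real.pi * p ξ x) : ℝ) : ℂ) * Complex.I) ∂μ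

variable {p : α → α → ℝ}

/-- hypotheses on the pairing -/
structure PairingOK {α : Type*} [NormedAddCommGroup α] [NormedSpace ℝ α]
    (p : α → α → ℝ) : Prop where
  cont : ∀ l, Continuous fun x => p l x
  addl : ∀ l l' x, p (l + l') x = p l x + p l' x
  smull : ∀ (t : ℝ) l x, p (t • l) x = t * p l x
  sep : ∀ x y : α, x ≠ y → ∃ l, p l x ≠ p l y

namespace PairingOK

variable (hp : PairingOK p)
include hp

theorem zerol (x : α) : p 0 x = 0 := by
  have := hp.smull 0 0 x; simpa using this

theorem negl (l x : α) : p (-l) x = -p l x := by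
  have := hp.smull (-1) l x; simpa using this

theorem subl (l l' x : α) : p (l - l') x = p l x - p l' x := by
  rw [sub_eq_add_neg, hp.addl, hp.negl, sub_eq_add_neg]

theorem norm_charF (l x : α) : ‖charF p l x‖ = 1 := by
  simp [charF, Complex.norm_exp]

theorem charF_zero (x : α) : charF p 0 x = 1 := by
  simp [charF, hp.zerol]

theorem continuous_charF (l : α) : Continuous fun x => charF p l x := by
  refine Complex.continuous_exp.comp ?_
  exact (Complex.continuous_ofReal.comp ((continuous_const.mul (hp.cont l)))).mul continuous_const

theorem charF_mul (l l' x : α) : charF p l x * charF p l' x = charF p (l + l') x := by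
  rw [charF, charF, charF, ← Complex.exp_add, hp.addl]
  push_cast; ring_nf

theorem conj_charF (l x : α) : conj (charF p l x) = charF p (-l) x := by
  rw [charF, charF, ← Complex.exp_conj, map_mul, Complex.conj_I, Complex.conj_ofReal, hp.negl]
  push_cast; ring_nf

theorem charF_mul_conj (l l' x : α) :
    charF p l x * conj (charF p l' x) = charF p (l - l') x := by
  rw [hp.conj_charF, hp.charF_mul, sub_eq_add_neg]

theorem charF_eq_neg_form (l x : α) : charF p l x
    = Complex.exp (((-(2 * Real.pi * p (-l) x) : ℝ) : ℂ) * Complex.I) := by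
  rw [charF, hp.negl]; push_cast; ring_nf

/-- the `hatF` integrand is a character -/
theorem hatF_eq_integral_charF (μ : Measure α) (ξ : α) :
    hatF p μ ξ = ∫ x, charF p (-ξ) x ∂μ := by
  unfold hatF
  congr 1; funext x
  rw [charF, hp.negl]; push_cast; ring_nf

theorem integral_charF_mul_conj (μ : Measure α) (l l' : α) :
    ∫ x, charF p l x * conj (charF p l' x) ∂μ = hatF p μ (l' - l) := by
  rw [hp.hatF_eq_integral_charF, neg_sub]
  congr 1; funext x
  rw [hp.charF_mul_conj]

theorem hatF_zero (μ : Measure α) [IsProbabilityMeasure μ] : hatF p μ 0 = 1 := by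
  rw [hp.hatF_eq_integral_charF]
  simp only [neg_zero, hp.charF_zero]
  simp

theorem hatF_neg (μ : Measure α) (ξ : α) : hatF p μ (-ξ) = conj (hatF p μ ξ) := by
  rw [hp.hatF_eq_integral_charF, hp.hatF_eq_integral_charF, ← integral_conj, neg_neg]
  congr 1; funext x
  rw [hp.conj_charF, neg_neg]

theorem norm_hatF_neg (μ : Measure α) (ξ : α) : ‖hatF p μ (-ξ)‖ = ‖hatF p μ ξ‖ := by
  rw [hp.hatF_neg]; exact RCLike.norm_conj _

theorem memLp_charF (μ : Measure α) [IsFiniteMeasure μ] (l : α) :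
    MemLp (charF p l) 2 μ :=
  MemLp.of_bound (hp.continuous_charF l).aestronglyMeasurable 1
    (Eventually.of_forall fun x => le_of_eq (hp.norm_charF l x))

end PairingOK

/-- the character as an element of L² -/
def charLp (hp : PairingOK p) (μ : Measure α) [IsFiniteMeasure μ] (l : α) : Lp ℂ 2 μ :=
  (hp.memLp_charF μ l).toLp

namespace PairingOK

variable (hp : PairingOK p)
include hp

theorem coeFn_charLp (μ : Measure α) [IsFiniteMeasure μ] (l : α) :
    charLp hp μ l =ᵐ[μ] charF p l := (hp.memLp_charF μ l).coeFn_toLp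

theorem inner_charLp (μ : Measure α) [IsFiniteMeasure μ] (l m : α) :
    (inner ℂ (charLp hp μ l) (charLp hp μ m) : ℂ) = conj (hatF p μ (m - l)) := by
  rw [L2.inner_def, ← hp.integral_charF_mul_conj μ l m, ← integral_conj]
  refine integral_congr_ae ?_
  filter_upwards [hp.coeFn_charLp μ l, hp.coeFn_charLp μ m] with x h1 h2
  rw [h1, h2, RCLike.inner_apply, map_mul, Complex.conj_conj, mul_comm]

theorem inner_charLp_self (μ : Measure α) [IsProbabilityMeasure μ] (l : α) :
    (inner ℂ (charLp hp μ l) (charLp hp μ l) : ℂ) = 1 := by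
  rw [hp.inner_charLp, sub_self, hp.hatF_zero]
  exact map_one _

theorem norm_charLp (μ : Measure α) [IsProbabilityMeasure μ] (l : α) :
    ‖charLp hp μ l‖ = 1 := by
  have h := inner_self_eq_norm_sq (𝕜 := ℂ) (charLp hp μ l)
  rw [hp.inner_charLp_self] at h
  rw [RCLike.one_re] at h
  nlinarith [norm_nonneg (charLp hp μ l)]

theorem inner_charLp_left (μ : Measure α) [IsFiniteMeasure μ] (f : Lp ℂ 2 μ) (l : α) :
    (inner ℂ (charLp hp μ l) f : ℂ) = ∫ x, f x * conj (charF p l x) ∂μ := by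
  rw [L2.inner_def]
  refine integral_congr_ae ?_
  filter_upwards [hp.coeFn_charLp μ l] with x h1
  rw [h1, RCLike.inner_apply, mul_comm]

theorem orthonormal_charLp (μ : Measure α) [IsProbabilityMeasure μ] {ι : Type*} (v : ι → α)
    (horth : ∀ i j, i ≠ j → hatF p μ (v j - v i) = 0) :
    Orthonormal ℂ (fun i => charLp hp μ (v i)) := by
  classical
  rw [orthonormal_iff_ite]
  intro i j
  by_cases h : i = j
  · subst h; simp only [if_pos rfl]; exact hp.inner_charLp_self μ (v i)
  · rw [if_neg h, hp.inner_charLp, horth i j h, map_zero]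

theorem summable_sq_hatF (μ : Measure α) [IsProbabilityMeasure μ] {ι : Type*} (v : ι → α)
    (horth : ∀ i j, i ≠ j → hatF p μ (v j - v i) = 0) (ξ : α) :
    Summable fun i => ‖hatF p μ (ξ + v i)‖ ^ 2 := by
  have hon := hp.orthonormal_charLp μ v horth
  have h := hon.inner_products_summable (x := charLp hp μ (-ξ))
  refine h.congr fun i => ?_
  rw [hp.inner_charLp, RCLike.norm_conj, show -ξ - v i = -(ξ + v i) by abel,
    hp.norm_hatF_neg]

theorem tsum_ofReal_sq_hatF (μ : Measure α) [IsProbabilityMeasure μ] (Λ : Set α)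
    (horth : ∀ l ∈ Λ, ∀ l' ∈ Λ, l ≠ l' → hatF p μ (l' - l) = 0)
    (hmax : ∀ f : Lp ℂ 2 μ, (∀ l ∈ Λ, ∫ x, f x * conj (charF p l x) ∂μ = 0) → f = 0)
    (ξ : α) :
    ∑' l : Λ, ENNReal.ofReal (‖hatF p μ (ξ + (l : α))‖ ^ 2) = 1 := by
  set v : Λ → Lp ℂ 2 μ := fun l => charLp hp μ l.val with hv
  have hon : Orthonormal ℂ v :=
    hp.orthonormal_charLp μ (fun l : Λ => (l : α))
      (fun i j hij => horth i i.2 j j.2 (fun h => hij (Subtype.ext h)))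
  have hsp : (Submodule.span ℂ (Set.range v))ᗮ = ⊥ := by
    rw [Submodule.eq_bot_iff]
    intro f hf
    refine hmax f fun l hl => ?_
    have hmem : v ⟨l, hl⟩ ∈ Submodule.span ℂ (Set.range v) :=
      Submodule.subset_span ⟨⟨l, hl⟩, rfl⟩
    have := (Submodule.mem_orthogonal _ _).1 hf _ hmem
    rw [← hp.inner_charLp_left μ f l]
    exact this
  set b := HilbertBasis.mkOfOrthogonalEqBot hon hsp with hbdef
  have hb : ∀ l, b l = v l := fun l =>
    congrFun (HilbertBasis.coe_mkOfOrthogonalEqBot hon hsp) l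
  set g := charLp hp μ (-ξ) with hg
  have key : HasSum (fun l => (inner ℂ g (b l) * inner ℂ (b l) g : ℂ)) (inner ℂ g g) :=
    b.hasSum_inner_mul_inner g g
  have hgg : (inner ℂ g g : ℂ) = 1 := hp.inner_charLp_self μ (-ξ)
  have hterm : ∀ l : Λ, (inner ℂ g (b l) * inner ℂ (b l) g : ℂ)
      = ((‖hatF p μ (ξ + (l : α))‖ ^ 2 : ℝ) : ℂ) := by
    intro l
    have hz : (inner ℂ (v l) g : ℂ) = hatF p μ (ξ + (l : α)) := by
      rw [hv]
      rw [hp.inner_charLp, show -ξ - (l : α) = -(ξ + (l : α)) by abel, hp.hatF_neg,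
        Complex.conj_conj]
    have h2 : (inner ℂ g (v l) : ℂ) = conj (inner ℂ (v l) g) := (inner_conj_symm g (v l)).symm
    rw [hb l, h2, hz, mul_comm, Complex.mul_conj, Complex.normSq_eq_norm_sq]
  rw [hgg] at key
  have key2 : HasSum (fun l : Λ => ‖hatF p μ (ξ + (l : α))‖ ^ 2) 1 := by
    have h3 := key.mapL Complex.reCLM
    have h4 : (fun l : Λ => Complex.reCLM (inner ℂ g (b l) * inner ℂ (b l) g))
        = fun l : Λ => ‖hatF p μ (ξ + (l : α))‖ ^ 2 := by
      funext l; rw [hterm l, Complex.reCLM_apply, Complex.ofReal_re]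
    rw [h4] at h3
    simpa using h3
  rw [← ENNReal.ofReal_tsum_of_nonneg (fun l => sq_nonneg _) key2.summable,
    key2.tsum_eq, ENNReal.ofReal_one]

theorem charF_sep (x y : α) (hxy : x ≠ y) : ∃ l, charF p l x ≠ charF p l y := by
  obtain ⟨l, hl⟩ := hp.sep x y hxy
  set c := p l x - p l y with hc
  have hc0 : c ≠ 0 := sub_ne_zero.2 hl
  set t : ℝ := 1 / (2 * c) with ht
  refine ⟨t • l, fun h => ?_⟩
  rw [charF, charF] at h
  have key : (2 * Real.pi * p (t • l) x) - (2 * Real.pi * p (t • l) y) = Real.pi := by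
    rw [hp.smull, hp.smull, ht]
    field_simp
    ring
  have h2 : Complex.exp (((2 * Real.pi * p (t • l) x : ℝ) : ℂ) * Complex.I -
      ((2 * Real.pi * p (t • l) y : ℝ) : ℂ) * Complex.I) = 1 := by
    rw [Complex.exp_sub, h, div_self (Complex.exp_ne_zero _)]
  rw [← sub_mul, ← Complex.ofReal_sub, key, Complex.exp_pi_mul_I] at h2
  norm_num at h2

/-- the span of characters is dense in L² of a compactly supported measure -/
theorem dense_span_charLp (μ : Measure α) [IsProbabilityMeasure μ]
    (K : Set α) (hK : IsCompact K) (hKc : μ Kᶜ = 0) :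
    Dense (↑(Submodule.span ℂ (Set.range (charLp hp μ))) : Set (Lp ℂ 2 μ)) := by
  classical
  haveI : CompactSpace K := isCompact_iff_compactSpace.mp hK
  set gen : α → C(α, ℂ) := fun l => ⟨charF p l, hp.continuous_charF l⟩ with hgen
  -- the span of the characters (in C(α, ℂ)) is closed under mul and star and contains 1
  have hone : (1 : C(α, ℂ)) ∈ Submodule.span ℂ (Set.range gen) := by
    have : gen 0 = 1 := ContinuousMap.ext fun x => hp.charF_zero x
    exact this ▸ Submodule.subset_span ⟨0, rfl⟩
  have hmulgen : ∀ l l', gen l * gen l' = gen (l + l') := by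
    intro l l'
    refine ContinuousMap.ext fun x => ?_
    exact hp.charF_mul l l' x
  have hmul : ∀ u ∈ Submodule.span ℂ (Set.range gen), ∀ v ∈ Submodule.span ℂ (Set.range gen),
      u * v ∈ Submodule.span ℂ (Set.range gen) := by
    intro u hu v hv
    induction hv using Submodule.span_induction with
    | mem w hw =>
      obtain ⟨l, rfl⟩ := hw
      induction hu using Submodule.span_induction with
      | mem w' hw' =>
        obtain ⟨l', rfl⟩ := hw'
        rw [hmulgen]
        exact Submodule.subset_span ⟨l' + l, rfl⟩
      | zero => rw [zero_mul]; exact Submodule.zero_mem _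
      | add a b _ _ ha hb => rw [add_mul]; exact Submodule.add_mem _ ha hb
      | smul c a _ ha => rw [smul_mul_assoc]; exact Submodule.smul_mem _ _ ha
    | zero => rw [mul_zero]; exact Submodule.zero_mem _
    | add a b _ _ ha hb => rw [mul_add]; exact Submodule.add_mem _ ha hb
    | smul c a _ ha => rw [mul_smul_comm]; exact Submodule.smul_mem _ _ ha
  have hstar : ∀ u ∈ Submodule.span ℂ (Set.range gen),
      star u ∈ Submodule.span ℂ (Set.range gen) := by
    intro u hu
    induction hu using Submodule.span_induction with
    | mem w hw =>
      obtain ⟨l, rfl⟩ := hw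
      have : star (gen l) = gen (-l) := by
        refine ContinuousMap.ext fun x => ?_
        rw [ContinuousMap.star_apply]
        exact hp.conj_charF l x
      rw [this]; exact Submodule.subset_span ⟨-l, rfl⟩
    | zero => rw [star_zero]; exact Submodule.zero_mem _
    | add a b _ _ ha hb => rw [star_add]; exact Submodule.add_mem _ ha hb
    | smul c a _ ha =>
      rw [star_smul]
      exact Submodule.smul_mem _ _ ha
  have hadj : ∀ u : C(α, ℂ), u ∈ StarAlgebra.adjoin ℂ (Set.range gen) →
      u ∈ Submodule.span ℂ (Set.range gen) := by
    intro u hu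
    induction hu using StarAlgebra.adjoin_induction with
    | mem w hw => exact Submodule.subset_span hw
    | algebraMap c =>
      rw [Algebra.algebraMap_eq_smul_one]
      exact Submodule.smul_mem _ _ hone
    | add a b _ _ ha hb => exact Submodule.add_mem _ ha hb
    | mul a b hA hB ha hb => exact hmul a ha b hb
    | star a _ ha => exact hstar a ha
  -- going to L²
  have hspanLp : ∀ u : C(α, ℂ), u ∈ Submodule.span ℂ (Set.range gen) →
      ∃ h : MemLp (⇑u) 2 μ, h.toLp ∈ Submodule.span ℂ (Set.range (charLp hp μ)) := by
    intro u hu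
    induction hu using Submodule.span_induction with
    | mem w hw =>
      obtain ⟨l, rfl⟩ := hw
      exact ⟨hp.memLp_charF μ l, Submodule.subset_span ⟨l, rfl⟩⟩
    | zero =>
      refine ⟨by simpa using zero_memLp, ?_⟩
      convert Submodule.zero_mem _ using 1
      rfl
    | add a b _ _ ha hb =>
      obtain ⟨h1, m1⟩ := ha
      obtain ⟨h2, m2⟩ := hb
      refine ⟨by simpa using h1.add h2, ?_⟩
      convert Submodule.add_mem _ m1 m2 using 1
      rfl
    | smul c a _ ha =>
      obtain ⟨h1, m1⟩ := ha
      refine ⟨by simpa using h1.const_smul c, ?_⟩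
      convert Submodule.smul_mem _ c m1 using 1
      rfl
  -- Stone-Weierstrass
  set ι : C(K, α) := ⟨Subtype.val, continuous_subtype_val⟩ with hι
  set φ : C(α, ℂ) →⋆ₐ[ℂ] C(K, ℂ) := ContinuousMap.compStarAlgHom' ℂ ℂ ι with hφ
  set A : StarSubalgebra ℂ C(K, ℂ) := (StarAlgebra.adjoin ℂ (Set.range gen)).map φ with hA
  have hAsep : A.SeparatesPoints := by
    intro x y hxy
    have hval : (x : α) ≠ (y : α) := fun h => hxy (Subtype.ext h)
    obtain ⟨l, hl⟩ := hp.charF_sep (x : α) (y : α) hval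
    refine ⟨⇑(φ (gen l)), ⟨φ (gen l), ?_, rfl⟩, hl⟩
    exact ⟨gen l, StarAlgebra.subset_adjoin ℂ _ ⟨l, rfl⟩, rfl⟩
  have hAdense : A.topologicalClosure = ⊤ :=
    ContinuousMap.starSubalgebra_topologicalClosure_eq_top_of_separatesPoints A hAsep
  -- conclude density
  rw [Metric.dense_iff]
  intro f ε hε
  obtain ⟨g₀, hg₀⟩ := (BoundedContinuousFunction.toLp_denseRange ℂ μ ℂ
    (by norm_num : (2 : ℝ≥0∞) ≠ ⊤)).exists_dist_lt f (by linarith : (0:ℝ) < ε/2)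
  have hg₀K : φ g₀.toContinuousMap ∈ closure (A : Set C(K, ℂ)) := by
    have : φ g₀.toContinuousMap ∈ A.topologicalClosure := hAdense ▸ trivial
    exact this
  obtain ⟨q', hq'A, hq'⟩ := Metric.mem_closure_iff.mp hg₀K (ε/4) (by linarith)
  obtain ⟨q, hqadj, hqφ⟩ := hq'A
  obtain ⟨hqmem, hqspan⟩ := hspanLp q (hadj q hqadj)
  refine ⟨hqmem.toLp, ?_, hqspan⟩
  rw [Metric.mem_ball]
  -- bound distance
  have haeK : ∀ᵐ x ∂μ, x ∈ K := by
    rw [ae_iff]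
    exact hKc
  have hbound : ∀ᵐ x ∂μ, ‖g₀ x - q x‖ ≤ ε/4 := by
    filter_upwards [haeK] with x hx
    have h1 : g₀ x - q x = (φ g₀.toContinuousMap - q') ⟨x, hx⟩ := by
      rw [← hqφ]
      simp [hφ, hι, ContinuousMap.compStarAlgHom']
    rw [h1]
    calc ‖(φ g₀.toContinuousMap - q') ⟨x, hx⟩‖ ≤ ‖φ g₀.toContinuousMap - q'‖ :=
          ContinuousMap.norm_coe_le_norm _ _
      _ ≤ ε/4 := by rw [← dist_eq_norm]; exact le_of_lt hq'
  have hd2 : dist (BoundedContinuousFunction.toLp 2 μ ℂ g₀) hqmem.toLp ≤ ε/4 := by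
    rw [dist_eq_norm, Lp.norm_def]
    have hcoe : (BoundedContinuousFunction.toLp 2 μ ℂ g₀ - hqmem.toLp : Lp ℂ 2 μ)
        =ᵐ[μ] fun x => g₀ x - q x := by
      filter_upwards [Lp.coeFn_sub (BoundedContinuousFunction.toLp 2 μ ℂ g₀) hqmem.toLp,
        BoundedContinuousFunction.coeFn_toLp 2 μ ℂ g₀, hqmem.coeFn_toLp] with x h1 h2 h3
      rw [h1, Pi.sub_apply, h2, h3]
    have hle : eLpNorm (⇑(BoundedContinuousFunction.toLp 2 μ ℂ g₀ - hqmem.toLp)) 2 μ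
        ≤ ENNReal.ofReal (ε/4) := by
      rw [eLpNorm_congr_ae hcoe]
      have := eLpNorm_le_of_ae_bound (p := 2) (μ := μ) hbound
      simpa using this
    calc (eLpNorm (⇑(BoundedContinuousFunction.toLp 2 μ ℂ g₀ - hqmem.toLp)) 2 μ).toReal
        ≤ (ENNReal.ofReal (ε/4)).toReal := ENNReal.toReal_mono ENNReal.ofReal_ne_top hle
      _ = ε/4 := ENNReal.toReal_ofReal (by linarith)
  have : dist f hqmem.toLp < ε := by
    calc dist f hqmem.toLp ≤ dist f (BoundedContinuousFunction.toLp 2 μ ℂ g₀)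
          + dist (BoundedContinuousFunction.toLp 2 μ ℂ g₀) hqmem.toLp := dist_triangle _ _ _
      _ < ε/2 + ε/4 := by
          have := hg₀
          rw [dist_comm] at this ⊢
          exact add_lt_add_of_lt_of_le (by rwa [dist_comm]) hd2
      _ < ε := by linarith
  rw [dist_comm] at this
  exact this

/-- Jorgensen–Pedersen: completeness from the summation criterion -/
theorem complete_of_JP (μ : Measure α) [IsProbabilityMeasure μ]
    (K : Set α) (hK : IsCompact K) (hKc : μ Kᶜ = 0) (Λ : Set α)
    (horth : ∀ l ∈ Λ, ∀ l' ∈ Λ, l ≠ l' → hatF p μ (l' - l) = 0)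
    (hJP : ∀ ξ : α, ∑' l : Λ, ENNReal.ofReal (‖hatF p μ (ξ + (l : α))‖ ^ 2) = 1)
    (f : Lp ℂ 2 μ) (hf : ∀ l ∈ Λ, ∫ x, f x * conj (charF p l x) ∂μ = 0) :
    f = 0 := by
  classical
  set v : Λ → Lp ℂ 2 μ := fun l => charLp hp μ l.val with hv
  have hon : Orthonormal ℂ v :=
    hp.orthonormal_charLp μ (fun l : Λ => (l : α))
      (fun i j hij => horth i i.2 j j.2 (fun h => hij (Subtype.ext h)))
  have hfv : ∀ l : Λ, (inner ℂ f (v l) : ℂ) = 0 := by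
    intro l
    have h1 : (inner ℂ (v l) f : ℂ) = 0 := by
      rw [hv]
      rw [hp.inner_charLp_left μ f l.val]
      exact hf l.val l.2
    rw [← inner_conj_symm, h1, map_zero]
  -- key claim : f is orthogonal to every character
  have claim : ∀ ξ : α, (inner ℂ f (charLp hp μ ξ) : ℂ) = 0 := by
    intro ξ
    set a := charLp hp μ ξ with ha
    have key : ∀ δ : ℝ, 0 < δ → δ < 1 → ‖(inner ℂ f a : ℂ)‖ ^ 2 ≤ ‖f‖ ^ 2 * δ := by
      intro δ hδ0 hδ1
      have h1 := hJP (-ξ)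
      rw [ENNReal.tsum_eq_iSup_sum] at h1
      have h2 : (1 : ℝ≥0∞) - ENNReal.ofReal δ < ⨆ s : Finset Λ,
          ∑ l ∈ s, ENNReal.ofReal (‖hatF p μ (-ξ + (l : α))‖ ^ 2) := by
        rw [h1]
        have hδne : ENNReal.ofReal δ ≠ 0 := by
          simp only [ne_eq, ENNReal.ofReal_eq_zero, not_le]
          exact hδ0
        exact ENNReal.sub_lt_self ENNReal.one_ne_top one_ne_zero hδne
      obtain ⟨F, hF⟩ := lt_iSup_iff.mp h2
      set S : ℝ := ∑ l ∈ F, ‖hatF p μ (-ξ + (l : α))‖ ^ 2 with hS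
      have hSnn : 0 ≤ S := Finset.sum_nonneg fun l _ => sq_nonneg _
      have hFS : (1 : ℝ≥0∞) - ENNReal.ofReal δ < ENNReal.ofReal S := by
        rwa [hS, ENNReal.ofReal_sum_of_nonneg fun l _ => sq_nonneg _]
      have hdS : 1 - δ < S := by
        have : ENNReal.ofReal (1 - δ) < ENNReal.ofReal S := by
          rwa [ENNReal.ofReal_sub 1 hδ0.le, ENNReal.ofReal_one]
        exact (ENNReal.ofReal_lt_ofReal_iff_of_nonneg (by linarith)).mp this
      -- the coefficients
      set c : Λ → ℂ := fun l => inner ℂ (v l) a with hc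
      have hcnorm : ∀ l : Λ, ‖c l‖ ^ 2 = ‖hatF p μ (-ξ + (l : α))‖ ^ 2 := by
        intro l
        rw [hc]
        simp only [hv]
        rw [hp.inner_charLp, RCLike.norm_conj,
          show ξ - (l : α) = -(-ξ + (l : α)) by abel, hp.norm_hatF_neg]
      set bF : Lp ℂ 2 μ := ∑ l ∈ F, c l • v l with hbF
      have hfbF : (inner ℂ f bF : ℂ) = 0 := by
        rw [hbF, inner_sum]
        refine Finset.sum_eq_zero fun l _ => ?_
        rw [inner_smul_right, hfv l, mul_zero]
      have hfab : (inner ℂ f a : ℂ) = inner ℂ f (a - bF) := by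
        rw [inner_sub_right, hfbF, sub_zero]
      have habF : (inner ℂ a bF : ℂ) = (S : ℂ) := by
        rw [hbF, inner_sum]
        have : ∀ l ∈ F, (inner ℂ a (c l • v l) : ℂ) = ((‖hatF p μ (-ξ + (l : α))‖ ^ 2 : ℝ) : ℂ) := by
          intro l _
          rw [inner_smul_right,
            show (inner ℂ a (v l) : ℂ) = conj (c l) from (inner_conj_symm a (v l)).symm,
            Complex.mul_conj, Complex.normSq_eq_norm_sq, hcnorm l]
        rw [Finset.sum_congr rfl this, hS]
        push_cast
        ring
      have hbFn : ‖bF‖ ^ 2 = S := by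
        have h3 : (inner ℂ bF bF : ℂ) = (S : ℂ) := by
          rw [hbF, sum_inner]
          have : ∀ l ∈ F, (inner ℂ (c l • v l) (∑ m ∈ F, c m • v m) : ℂ)
              = ((‖hatF p μ (-ξ + (l : α))‖ ^ 2 : ℝ) : ℂ) := by
            intro l hl
            rw [inner_smul_left, hon.inner_right_sum c hl, mul_comm, Complex.mul_conj,
              Complex.normSq_eq_norm_sq, hcnorm l]
          rw [Finset.sum_congr rfl this, hS]
          push_cast
          ring
        have h4 := inner_self_eq_norm_sq (𝕜 := ℂ) bF
        rw [h3] at h4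
        rw [← h4]
        simp [RCLike.re_to_complex]
      have hna : ‖a‖ = 1 := hp.norm_charLp μ ξ
      have hsub : ‖a - bF‖ ^ 2 = 1 - S := by
        rw [norm_sub_sq (𝕜 := ℂ), hna, habF, hbFn]
        simp [RCLike.re_to_complex]
        ring
      have hsubδ : ‖a - bF‖ ^ 2 ≤ δ := by
        rw [hsub]; linarith
      calc ‖(inner ℂ f a : ℂ)‖ ^ 2 = ‖(inner ℂ f (a - bF) : ℂ)‖ ^ 2 := by rw [hfab]
        _ ≤ (‖f‖ * ‖a - bF‖) ^ 2 := by
            have := norm_inner_le_norm (𝕜 := ℂ) f (a - bF)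
            exact pow_le_pow_left₀ (norm_nonneg _) this 2
        _ = ‖f‖ ^ 2 * ‖a - bF‖ ^ 2 := by ring
        _ ≤ ‖f‖ ^ 2 * δ := by
            exact mul_le_mul_of_nonneg_left hsubδ (sq_nonneg _)
    -- conclude inner ℂ f a = 0
    by_contra hne
    have hX0 : 0 < ‖(inner ℂ f a : ℂ)‖ := norm_pos_iff.mpr hne
    set X := ‖(inner ℂ f a : ℂ)‖ ^ 2 with hX
    set C := ‖f‖ ^ 2 with hC
    have hXpos : 0 < X := pow_pos hX0 2
    have hCnn : 0 ≤ C := sq_nonneg _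
    have h2C : 0 < 2 * (C + 1) := by nlinarith
    have hδpos : 0 < min (1/2) (X / (2 * (C + 1))) :=
      lt_min (by norm_num) (div_pos hXpos h2C)
    have hδ := key (min (1/2) (X / (2 * (C + 1)))) hδpos
      (lt_of_le_of_lt (min_le_left _ _) (by norm_num))
    have hmin : min (1/2) (X / (2 * (C + 1))) ≤ X / (2 * (C + 1)) := min_le_right _ _
    have hdiv : C * (X / (2 * (C + 1))) < X := by
      rw [div_eq_mul_inv]
      rw [show C * (X * (2 * (C + 1))⁻¹) = (C / (2 * (C + 1))) * X by field_simp]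
      have : C / (2 * (C + 1)) < 1 := by
        rw [div_lt_one h2C]; nlinarith
      nlinarith
    nlinarith [mul_le_mul_of_nonneg_left hmin hCnn]
  -- density
  have hd := hp.dense_span_charLp μ K hK hKc
  have hbot : (Submodule.span ℂ (Set.range (charLp hp μ)))ᗮ = ⊥ := by
    rw [← Submodule.topologicalClosure_eq_top_iff,
      ← Submodule.dense_iff_topologicalClosure_eq_top]
    exact hd
  have hforth : f ∈ (Submodule.span ℂ (Set.range (charLp hp μ)))ᗮ := by
    rw [Submodule.mem_orthogonal]
    intro u hu
    induction hu using Submodule.span_induction with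
    | mem w hw =>
      obtain ⟨ξ, rfl⟩ := hw
      rw [← inner_conj_symm, claim ξ, map_zero]
    | zero => rw [inner_zero_left]
    | add a b _ _ ha hb => rw [inner_add_left, ha, hb, add_zero]
    | smul t a _ ha => rw [inner_smul_left, ha, mul_zero]
  rw [hbot] at hforth
  exact Submodule.mem_bot ℂ |>.mp hforth

end PairingOK

end Generic

noncomputable section Instances

/-- the Euclidean pairing -/
def pE (m : ℕ) : EuclideanSpace ℝ (Fin m) → EuclideanSpace ℝ (Fin m) → ℝ :=
  fun l x => (inner ℝ l x : ℝ)

/-- the product pairing -/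
def pP (r s : ℕ) : (EuclideanSpace ℝ (Fin r) × EuclideanSpace ℝ (Fin s)) →
    (EuclideanSpace ℝ (Fin r) × EuclideanSpace ℝ (Fin s)) → ℝ :=
  fun l x => (inner ℝ l.1 x.1 : ℝ) + (inner ℝ l.2 x.2 : ℝ)

theorem pairingOK_pE (m : ℕ) : PairingOK (pE m) := by
  refine ⟨fun l => continuous_const.inner continuous_id, ?_, ?_, ?_⟩
  · intro l l' x; exact inner_add_left l l' x
  · intro t l x; exact real_inner_smul_left l x t
  · intro x y hxy
    refine ⟨x - y, fun h => hxy ?_⟩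
    have h2 : (inner ℝ (x - y) (x - y) : ℝ) = 0 := by
      rw [inner_sub_right]
      unfold pE at h
      linarith [h]
    exact sub_eq_zero.mp (inner_self_eq_zero.mp h2)

theorem pairingOK_pP (r s : ℕ) : PairingOK (pP r s) := by
  refine ⟨?_, ?_, ?_, ?_⟩
  · intro l
    exact ((continuous_const.inner continuous_fst)).add
      ((continuous_const.inner continuous_snd))
  · intro l l' x
    unfold pP
    rw [Prod.fst_add, Prod.snd_add, inner_add_left, inner_add_left]
    ring
  · intro t l x
    unfold pP
    rw [Prod.smul_fst, Prod.smul_snd, real_inner_smul_left, real_inner_smul_left]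
    ring
  · intro x y hxy
    refine ⟨x - y, fun h => hxy ?_⟩
    unfold pP at h
    rw [Prod.fst_sub, Prod.snd_sub] at h
    have h1 : (inner ℝ (x.1 - y.1) (x.1 - y.1) : ℝ) + (inner ℝ (x.2 - y.2) (x.2 - y.2) : ℝ) = 0 := by
      rw [inner_sub_right, inner_sub_right]
      linarith
    have n1 : (0:ℝ) ≤ inner ℝ (x.1 - y.1) (x.1 - y.1) := real_inner_self_nonneg
    have n2 : (0:ℝ) ≤ inner ℝ (x.2 - y.2) (x.2 - y.2) := real_inner_self_nonneg
    have e1 : x.1 = y.1 := sub_eq_zero.mp (inner_self_eq_zero.mp (by linarith : (inner ℝ (x.1 - y.1) (x.1 - y.1) : ℝ) = 0))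
    have e2 : x.2 = y.2 := sub_eq_zero.mp (inner_self_eq_zero.mp (by linarith : (inner ℝ (x.2 - y.2) (x.2 - y.2) : ℝ) = 0))
    exact Prod.ext e1 e2

/-- a spectrum satisfies the Jorgensen–Pedersen identity -/
theorem spectrum_JP {m : ℕ} (ν : MeasureTheory.Measure (EuclideanSpace ℝ (Fin m)))
    [MeasureTheory.IsProbabilityMeasure ν] (Γ : Set (EuclideanSpace ℝ (Fin m)))
    (hΓ : IsSpectrum ν Γ) (ξ : EuclideanSpace ℝ (Fin m)) :
    ∑' γ : Γ, ENNReal.ofReal (‖muHat ν (ξ + (γ : EuclideanSpace ℝ (Fin m)))‖ ^ 2) = 1 := by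
  have hpe := pairingOK_pE m
  refine hpe.tsum_ofReal_sq_hatF ν Γ ?_ ?_ ξ
  · intro l hl l' hl' hne
    rw [← hpe.integral_charF_mul_conj]
    exact hΓ.2.2.1 l hl l' hl' hne
  · intro f hf
    exact hΓ.2.2.2 f hf

end Instances

noncomputable section Product

/-- The Fourier transform of a measure on the product `ℝ^r × ℝ^s`. -/
def muHatProd {r s : ℕ}
    (μ : MeasureTheory.Measure (EuclideanSpace ℝ (Fin r) × EuclideanSpace ℝ (Fin s)))
    (ξ : EuclideanSpace ℝ (Fin r) × EuclideanSpace ℝ (Fin s)) : ℂ :=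
  ∫ x, Complex.exp
    (((-(2 * Real.pi * ((inner ℝ ξ.1 x.1 : ℝ) + (inner ℝ ξ.2 x.2 : ℝ))) : ℝ) : ℂ) * Complex.I) ∂μ

/-- The exponential function `e_l(x) = e^{2πi⟨l,x⟩}` on the product `ℝ^r × ℝ^s`. -/
def expFnProd {r s : ℕ} (l x : EuclideanSpace ℝ (Fin r) × EuclideanSpace ℝ (Fin s)) : ℂ :=
  Complex.exp
    (((2 * Real.pi * ((inner ℝ l.1 x.1 : ℝ) + (inner ℝ l.2 x.2 : ℝ)) : ℝ) : ℂ) * Complex.I)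

/-- `Λ` is a spectrum of a measure `μ` on the product `ℝ^r × ℝ^s`: it is countable and
`E(Λ)` is an orthonormal basis of `L²(μ)` (an orthonormal family which is maximal). -/
def IsSpectrumProd {r s : ℕ}
    (μ : MeasureTheory.Measure (EuclideanSpace ℝ (Fin r) × EuclideanSpace ℝ (Fin s)))
    (Λ : Set (EuclideanSpace ℝ (Fin r) × EuclideanSpace ℝ (Fin s))) : Prop :=
  Λ.Countable ∧
  (∀ l ∈ Λ, ∫ x, expFnProd l x * conj (expFnProd l x) ∂μ = 1) ∧
  (∀ l ∈ Λ, ∀ l' ∈ Λ, l ≠ l' → ∫ x, expFnProd l x * conj (expFnProd l' x) ∂μ = 0) ∧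
  (∀ f : MeasureTheory.Lp ℂ 2 μ,
    (∀ l ∈ Λ, ∫ x, f x * conj (expFnProd l x) ∂μ = 0) → f = 0)

/-- Spectra of quasi-product measures: if `Γ` is a spectrum of
`μ₂^{(s)}` for `μ₁`-a.e. `s`, and for each `γ ∈ Γ` the set `Λ_γ` is a spectrum of `μ₁`,
then `⋃_{γ ∈ Γ} (Λ_γ × {γ})` is a spectrum of `μ`. -/
theorem product_spectrum
    {d r : ℕ} (hr1 : 1 ≤ r) (hrd : r < d)
    (μ : MeasureTheory.Measure
      (EuclideanSpace ℝ (Fin r) × EuclideanSpace ℝ (Fin (d - r))))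
    (hμ : MeasureTheory.IsProbabilityMeasure μ)
    (hμc : ∃ K, IsCompact K ∧ μ Kᶜ = 0)
    (μ₁ : MeasureTheory.Measure (EuclideanSpace ℝ (Fin r)))
    (hμ₁ : MeasureTheory.IsProbabilityMeasure μ₁)
    (hμ₁c : ∃ K, IsCompact K ∧ μ₁ Kᶜ = 0)
    (μ₂ : EuclideanSpace ℝ (Fin r) → MeasureTheory.Measure (EuclideanSpace ℝ (Fin (d - r))))
    (hμ₂ : ∀ s, MeasureTheory.IsProbabilityMeasure (μ₂ s))
    (hμ₂c : ∀ s, ∃ K, IsCompact K ∧ μ₂ s Kᶜ = 0)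
    (hint : ∀ x₂ : EuclideanSpace ℝ (Fin (d - r)),
      MeasureTheory.Integrable (fun s => ‖muHat (μ₂ s) x₂‖ ^ 2) μ₁)
    (hkey : ∀ Λ₁ : Set (EuclideanSpace ℝ (Fin r)), IsSpectrum μ₁ Λ₁ →
      ∀ (x₁ : EuclideanSpace ℝ (Fin r)) (x₂ : EuclideanSpace ℝ (Fin (d - r))),
        ∑' l : Λ₁, ‖muHatProd μ (x₁ + (l : EuclideanSpace ℝ (Fin r)), x₂)‖ ^ 2 =
          ∫ s, ‖muHat (μ₂ s) x₂‖ ^ 2 ∂μ₁)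
    (Γ : Set (EuclideanSpace ℝ (Fin (d - r)))) (hΓc : Γ.Countable)
    (hΓ : ∀ᵐ s ∂μ₁, IsSpectrum (μ₂ s) Γ)
    (Λfam : EuclideanSpace ℝ (Fin (d - r)) → Set (EuclideanSpace ℝ (Fin r)))
    (hfam : ∀ γ ∈ Γ, IsSpectrum μ₁ (Λfam γ)) :
    IsSpectrumProd μ (⋃ γ ∈ Γ, Λfam γ ×ˢ {γ}) := by
  classical
  obtain ⟨K, hK, hKc⟩ := hμc
  haveI := hμ
  haveI := hμ₁
  haveI := fun s => hμ₂ s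
  have hpp : PairingOK (pP r (d - r)) := pairingOK_pP r (d - r)
  have hpe : PairingOK (pE (d - r)) := pairingOK_pE (d - r)
  set Λ : Set (EuclideanSpace ℝ (Fin r) × EuclideanSpace ℝ (Fin (d - r))) :=
    ⋃ γ ∈ Γ, Λfam γ ×ˢ {γ} with hΛdef
  -- membership description
  have hmem : ∀ m : EuclideanSpace ℝ (Fin r) × EuclideanSpace ℝ (Fin (d - r)),
      m ∈ Λ ↔ m.2 ∈ Γ ∧ m.1 ∈ Λfam m.2 := by
    intro m
    constructor
    · intro hm
      rw [hΛdef, Set.mem_iUnion₂] at hm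
      obtain ⟨γ, hγ, hm1, hm2⟩ := hm
      rw [Set.mem_singleton_iff] at hm2
      subst hm2
      exact ⟨hγ, hm1⟩
    · rintro ⟨h1, h2⟩
      rw [hΛdef, Set.mem_iUnion₂]
      exact ⟨m.2, h1, h2, rfl⟩
  -- C1 : orthogonality in horizontal fibers
  have hzero2 : ∀ s, muHat (μ₂ s) (0 : EuclideanSpace ℝ (Fin (d - r))) = 1 :=
    fun s => hpe.hatF_zero (μ₂ s)
  have hC1 : ∀ γ ∈ Γ, ∀ lam ∈ Λfam γ, ∀ lam' ∈ Λfam γ, lam ≠ lam' →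
      muHatProd μ (lam' - lam, 0) = 0 := by
    intro γ hγ lam hlam lam' hlam' hne
    have h := hkey (Λfam γ) (hfam γ hγ) (-lam) 0
    have hrhs : ∫ s, ‖muHat (μ₂ s) (0 : EuclideanSpace ℝ (Fin (d - r)))‖ ^ 2 ∂μ₁ = 1 := by
      simp only [hzero2]
      simp
    rw [hrhs] at h
    have hsum : Summable fun l : Λfam γ =>
        ‖muHatProd μ (-lam + (l : EuclideanSpace ℝ (Fin r)), 0)‖ ^ 2 := by
      by_contra hns
      rw [tsum_eq_zero_of_not_summable hns] at h
      norm_num at h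
    set i : ↥(Λfam γ) := ⟨lam, hlam⟩ with hi
    set j : ↥(Λfam γ) := ⟨lam', hlam'⟩ with hj
    have hij : i ≠ j := fun hh => hne (congrArg Subtype.val hh)
    have hle := Summable.sum_le_tsum ({i, j} : Finset ↥(Λfam γ)) (fun l _ => sq_nonneg _) hsum
    rw [h, Finset.sum_insert (by simpa using hij), Finset.sum_singleton] at hle
    have hterm1 : ‖muHatProd μ (-lam + ((i : EuclideanSpace ℝ (Fin r))), 0)‖ ^ 2 = 1 := by
      have hiv : (i : EuclideanSpace ℝ (Fin r)) = lam := rfl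
      rw [hiv, neg_add_cancel]
      have h00 : muHatProd μ ((0 : EuclideanSpace ℝ (Fin r)),
          (0 : EuclideanSpace ℝ (Fin (d - r)))) = 1 := hpp.hatF_zero μ
      rw [h00]
      norm_num
    rw [hterm1] at hle
    have hjnn : (0:ℝ) ≤ ‖muHatProd μ (-lam + ((j : EuclideanSpace ℝ (Fin r))), 0)‖ ^ 2 :=
      sq_nonneg _
    have hj0 : ‖muHatProd μ (-lam + ((j : EuclideanSpace ℝ (Fin r))), 0)‖ ^ 2 = 0 := by
      linarith
    have hjv : (j : EuclideanSpace ℝ (Fin r)) = lam' := rfl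
    rw [hjv, neg_add_eq_sub] at hj0
    have := pow_eq_zero_iff (n := 2) (by norm_num) |>.mp hj0
    exact norm_eq_zero.mp this
  -- orthonormality of the family over any horizontal fiber
  have hONfib : ∀ γ ∈ Γ, ∀ i j : ↥(Λfam γ), i ≠ j →
      hatF (pP r (d - r)) μ
        ((((j : EuclideanSpace ℝ (Fin r)), (0 : EuclideanSpace ℝ (Fin (d - r)))) :
          EuclideanSpace ℝ (Fin r) × EuclideanSpace ℝ (Fin (d - r)))
        - ((i : EuclideanSpace ℝ (Fin r)), (0 : EuclideanSpace ℝ (Fin (d - r))))) = 0 := by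
    intro γ hγ i j hij
    have hvne : (i : EuclideanSpace ℝ (Fin r)) ≠ (j : EuclideanSpace ℝ (Fin r)) :=
      fun h => hij (Subtype.ext h)
    have := hC1 γ hγ i i.2 j j.2 hvne
    have heq : ((((j : EuclideanSpace ℝ (Fin r)), (0 : EuclideanSpace ℝ (Fin (d - r)))) :
          EuclideanSpace ℝ (Fin r) × EuclideanSpace ℝ (Fin (d - r)))
        - ((i : EuclideanSpace ℝ (Fin r)), (0 : EuclideanSpace ℝ (Fin (d - r)))))
        = (((j : EuclideanSpace ℝ (Fin r)) - (i : EuclideanSpace ℝ (Fin r)),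
            (0 : EuclideanSpace ℝ (Fin (d - r))))) := by
      rw [Prod.mk_sub_mk, sub_zero]
    rw [heq]
    exact this
  -- full orthogonality
  have horth : ∀ m ∈ Λ, ∀ m' ∈ Λ, m ≠ m' → hatF (pP r (d - r)) μ (m' - m) = 0 := by
    intro m hm m' hm' hne
    obtain ⟨hγ, hlam⟩ := (hmem m).mp hm
    obtain ⟨hγ', hlam'⟩ := (hmem m').mp hm'
    have hsubeq : m' - m = (m'.1 - m.1, m'.2 - m.2) := rfl
    by_cases hgg : m.2 = m'.2
    · -- same fiber
      have hne1 : m.1 ≠ m'.1 := by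
        intro h1
        exact hne (Prod.ext h1 hgg)
      have := hC1 m.2 hγ m.1 hlam m'.1 (hgg ▸ hlam') hne1
      rw [hsubeq, ← hgg, sub_self]
      exact this
    · -- different fibers
      have h := hkey (Λfam m'.2) (hfam m'.2 hγ') (-m.1) (m'.2 - m.2)
      have hrhs : ∫ s, ‖muHat (μ₂ s) (m'.2 - m.2)‖ ^ 2 ∂μ₁ = 0 := by
        have hae : ∀ᵐ s ∂μ₁, ‖muHat (μ₂ s) (m'.2 - m.2)‖ ^ 2 = 0 := by
          filter_upwards [hΓ] with s hs
          have h0 : muHat (μ₂ s) (m'.2 - m.2) = 0 := by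
            have h1 : ∫ x, expFn m.2 x * conj (expFn m'.2 x) ∂(μ₂ s)
                = hatF (pE (d - r)) (μ₂ s) (m'.2 - m.2) :=
              hpe.integral_charF_mul_conj (μ₂ s) m.2 m'.2
            have h2 := hs.2.2.1 m.2 hγ m'.2 hγ' hgg
            rw [h1] at h2
            exact h2
          rw [h0]
          norm_num
        exact integral_eq_zero_of_ae hae
      rw [hrhs] at h
      -- summability from Bessel
      have hsum0 := hpp.summable_sq_hatF μ
        (fun l : ↥(Λfam m'.2) => (((l : EuclideanSpace ℝ (Fin r)),
          (0 : EuclideanSpace ℝ (Fin (d - r)))) :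
          EuclideanSpace ℝ (Fin r) × EuclideanSpace ℝ (Fin (d - r))))
        (hONfib m'.2 hγ') (-m.1, m'.2 - m.2)
      have hsum : Summable fun l : Λfam m'.2 =>
          ‖muHatProd μ (-m.1 + (l : EuclideanSpace ℝ (Fin r)), m'.2 - m.2)‖ ^ 2 := by
        refine hsum0.congr fun l => ?_
        have harg : ((-m.1, m'.2 - m.2) +
            (((l : EuclideanSpace ℝ (Fin r)), (0 : EuclideanSpace ℝ (Fin (d - r)))) :
              EuclideanSpace ℝ (Fin r) × EuclideanSpace ℝ (Fin (d - r))))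
            = (-m.1 + (l : EuclideanSpace ℝ (Fin r)), m'.2 - m.2) := by
          rw [Prod.mk_add_mk, add_zero]
        rw [harg]
        rfl
      have hle := Summable.le_tsum hsum ⟨m'.1, hlam'⟩ (fun l _ => sq_nonneg _)
      rw [h] at hle
      have hj0 : ‖muHatProd μ (-m.1 + m'.1, m'.2 - m.2)‖ ^ 2 = 0 :=
        le_antisymm hle (sq_nonneg _)
      have := pow_eq_zero_iff (n := 2) (by norm_num) |>.mp hj0
      have h00 := norm_eq_zero.mp this
      rw [neg_add_eq_sub] at h00
      rw [hsubeq]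
      exact h00
  -- Jorgensen-Pedersen identity for Λ
  have hJP : ∀ ξ : EuclideanSpace ℝ (Fin r) × EuclideanSpace ℝ (Fin (d - r)),
      ∑' l : Λ, ENNReal.ofReal
        (‖hatF (pP r (d - r)) μ (ξ + (l : EuclideanSpace ℝ (Fin r) × EuclideanSpace ℝ (Fin (d - r))))‖ ^ 2) = 1 := by
    intro ξ
    haveI : Countable ↥Γ := hΓc.to_subtype
    set F : EuclideanSpace ℝ (Fin r) × EuclideanSpace ℝ (Fin (d - r)) → ℝ≥0∞ :=
      fun x => ENNReal.ofReal (‖hatF (pP r (d - r)) μ (ξ + x)‖ ^ 2) with hF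
    -- fiberwise computation
    have hfiber : ∀ γ : ↥Γ, ∑' l : ↥(Λfam γ.val),
        F ((l : EuclideanSpace ℝ (Fin r)), (γ.val))
        = ∫⁻ s, ENNReal.ofReal (‖muHat (μ₂ s) (ξ.2 + γ.val)‖ ^ 2) ∂μ₁ := by
      intro γ
      have hsum0 := hpp.summable_sq_hatF μ
        (fun l : ↥(Λfam γ.val) => (((l : EuclideanSpace ℝ (Fin r)),
          (0 : EuclideanSpace ℝ (Fin (d - r)))) :
          EuclideanSpace ℝ (Fin r) × EuclideanSpace ℝ (Fin (d - r))))
        (hONfib γ.val γ.2) (ξ.1, ξ.2 + γ.val)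
      have hsum : Summable fun l : ↥(Λfam γ.val) =>
          ‖muHatProd μ (ξ.1 + (l : EuclideanSpace ℝ (Fin r)), ξ.2 + γ.val)‖ ^ 2 := by
        refine hsum0.congr fun l => ?_
        have harg : ((ξ.1, ξ.2 + γ.val) +
            (((l : EuclideanSpace ℝ (Fin r)), (0 : EuclideanSpace ℝ (Fin (d - r)))) :
              EuclideanSpace ℝ (Fin r) × EuclideanSpace ℝ (Fin (d - r))))
            = (ξ.1 + (l : EuclideanSpace ℝ (Fin r)), ξ.2 + γ.val) := by
          rw [Prod.mk_add_mk, add_zero]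
        rw [harg]
        rfl
      have hkeyv := hkey (Λfam γ.val) (hfam γ.val γ.2) ξ.1 (ξ.2 + γ.val)
      have hterm : ∀ l : ↥(Λfam γ.val),
          F ((l : EuclideanSpace ℝ (Fin r)), (γ.val))
          = ENNReal.ofReal (‖muHatProd μ (ξ.1 + (l : EuclideanSpace ℝ (Fin r)),
              ξ.2 + γ.val)‖ ^ 2) := by
        intro l
        rw [hF]
        rfl
      calc ∑' l : ↥(Λfam γ.val), F ((l : EuclideanSpace ℝ (Fin r)), (γ.val))
          = ∑' l : ↥(Λfam γ.val), ENNReal.ofReal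
            (‖muHatProd μ (ξ.1 + (l : EuclideanSpace ℝ (Fin r)), ξ.2 + γ.val)‖ ^ 2) :=
            tsum_congr hterm
        _ = ENNReal.ofReal (∑' l : ↥(Λfam γ.val),
            ‖muHatProd μ (ξ.1 + (l : EuclideanSpace ℝ (Fin r)), ξ.2 + γ.val)‖ ^ 2) :=
            (ENNReal.ofReal_tsum_of_nonneg (fun l => sq_nonneg _) hsum).symm
        _ = ENNReal.ofReal (∫ s, ‖muHat (μ₂ s) (ξ.2 + γ.val)‖ ^ 2 ∂μ₁) := by rw [hkeyv]
        _ = ∫⁻ s, ENNReal.ofReal (‖muHat (μ₂ s) (ξ.2 + γ.val)‖ ^ 2) ∂μ₁ :=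
            MeasureTheory.ofReal_integral_eq_lintegral_ofReal (hint (ξ.2 + γ.val))
              (Eventually.of_forall fun s => sq_nonneg _)
    -- reindex the union as a sigma type
    set T : ↥Γ → Set (EuclideanSpace ℝ (Fin r) × EuclideanSpace ℝ (Fin (d - r))) :=
      fun γ => (Λfam γ.val) ×ˢ ({γ.val} : Set (EuclideanSpace ℝ (Fin (d - r)))) with hT
    have hTdisj : Pairwise (Function.onFun Disjoint T) := by
      intro γ₁ γ₂ hne12
      rw [Function.onFun, Set.disjoint_left]
      rintro ⟨a, b⟩ h1 h2
      have e1 : b = γ₁.val := h1.2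
      have e2 : b = γ₂.val := h2.2
      exact hne12 (Subtype.ext (e1 ▸ e2))
    have hUeq : Λ = ⋃ γ : ↥Γ, T γ := by
      rw [hΛdef, Set.biUnion_eq_iUnion]
    have hstep1 : ∑' l : Λ, F ↑l = ∑' l : ↥(⋃ γ : ↥Γ, T γ), F ↑l := by
      rw [hUeq]
    set e := Set.unionEqSigmaOfDisjoint hTdisj with he
    have hstep2 : ∑' l : ↥(⋃ γ : ↥Γ, T γ), F ↑l
        = ∑' σ : (Σ γ : ↥Γ, ↥(T γ)), F ↑(e.symm σ) :=
      (e.symm.tsum_eq (fun l : ↥(⋃ γ : ↥Γ, T γ) => F ↑l)).symm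
    have hesymm : ∀ σ : (Σ γ : ↥Γ, ↥(T γ)), (↑(e.symm σ) :
        EuclideanSpace ℝ (Fin r) × EuclideanSpace ℝ (Fin (d - r))) = ↑σ.2 := fun σ => rfl
    have hstep3 : ∑' σ : (Σ γ : ↥Γ, ↥(T γ)), F ↑(e.symm σ)
        = ∑' γ : ↥Γ, ∑' b : ↥(T γ), F ↑b := by
      exact (tsum_congr fun σ => by rw [hesymm]).trans
        (ENNReal.tsum_sigma' (fun σ : (Σ γ : ↥Γ, ↥(T γ)) =>
          F (↑σ.2 : EuclideanSpace ℝ (Fin r) × EuclideanSpace ℝ (Fin (d - r)))))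
    have hstep4 : ∀ γ : ↥Γ, ∑' b : ↥(T γ), F ↑b
        = ∑' l : ↥(Λfam γ.val), F ((l : EuclideanSpace ℝ (Fin r)), (γ.val)) := by
      intro γ
      let eγ : ↥(Λfam γ.val) ≃ ↥(T γ) :=
        { toFun := fun l => ⟨((l : EuclideanSpace ℝ (Fin r)), γ.val), ⟨l.2, rfl⟩⟩
          invFun := fun b => ⟨b.val.1, b.2.1⟩
          left_inv := fun l => rfl
          right_inv := fun b => Subtype.ext (Prod.ext rfl (Set.mem_singleton_iff.mp b.2.2).symm) }
      exact ((eγ.tsum_eq (fun b : ↥(T γ) => F ↑b)).symm).trans (tsum_congr fun l => rfl)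
    calc ∑' l : Λ, F ↑l = ∑' γ : ↥Γ, ∑' b : ↥(T γ), F ↑b := by
          rw [hstep1, hstep2, hstep3]
      _ = ∑' γ : ↥Γ, ∫⁻ s, ENNReal.ofReal (‖muHat (μ₂ s) (ξ.2 + γ.val)‖ ^ 2) ∂μ₁ := by
          refine tsum_congr fun γ => ?_
          rw [hstep4 γ, hfiber γ]
      _ = ∫⁻ s, ∑' γ : ↥Γ, ENNReal.ofReal (‖muHat (μ₂ s) (ξ.2 + γ.val)‖ ^ 2) ∂μ₁ := by
          have hmeas : ∀ γ : ↥Γ, AEMeasurable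
              (fun s => ENNReal.ofReal (‖muHat (μ₂ s) (ξ.2 + γ.val)‖ ^ 2)) μ₁ := by
            intro γ
            have h1 : AEMeasurable (fun s => ‖muHat (μ₂ s) (ξ.2 + γ.val)‖ ^ 2) μ₁ :=
              (hint (ξ.2 + γ.val)).aestronglyMeasurable.aemeasurable
            exact ENNReal.measurable_ofReal.comp_aemeasurable h1
          exact (MeasureTheory.lintegral_tsum (f := fun (γ : ↥Γ) s =>
            ENNReal.ofReal (‖muHat (μ₂ s) (ξ.2 + γ.val)‖ ^ 2)) hmeas).symm
      _ = ∫⁻ _, 1 ∂μ₁ := by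
          refine lintegral_congr_ae ?_
          filter_upwards [hΓ] with s hs
          exact spectrum_JP (μ₂ s) Γ hs ξ.2
      _ = 1 := by
          rw [lintegral_one, measure_univ]
  refine ⟨?_, ?_, ?_, ?_⟩
  · -- countable
    refine Set.Countable.biUnion hΓc fun γ hγ => ?_
    exact Set.Countable.prod (hfam γ hγ).1 (Set.countable_singleton γ)
  · -- normalization
    intro l hl
    have hfun : ∀ x, expFnProd l x * conj (expFnProd l x) = 1 := by
      intro x
      have h1 : expFnProd l x * conj (expFnProd l x)
          = charF (pP r (d - r)) (l - l) x := hpp.charF_mul_conj l l x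
      rw [h1, sub_self, hpp.charF_zero]
    simp only [hfun]
    simp
  · -- orthogonality
    intro l hl l' hl' hne
    have h1 : ∫ x, expFnProd l x * conj (expFnProd l' x) ∂μ
        = hatF (pP r (d - r)) μ (l' - l) := hpp.integral_charF_mul_conj μ l l'
    rw [h1]
    exact horth l hl l' hl' hne
  · -- completeness
    intro f hf
    exact hpp.complete_of_JP μ K hK hKc Λ horth hJP f hf


end Product
end
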